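/- arXiv:2304.10835 — 4 statements merged into one kernel-verified Lean document; each statement's English description precedes it below -/
import Mathlib

section
/- Let γ ∈ ℂ. There exists η ∈ L¹([0,a†],ℂ), not a.e. zero, such that for a.e. a ∈ [0,a†] it holds −η(a) + ∫_0^{a†} β(â)Π0(â)η(â) dâ − ∫_0^{a} μ1(â)η(â) dâ = γ ∫_0^{a} η(â) dâ, if and only if K̂(γ) = 1. Moreover, any such η satisfies η(a) = α·exp(−γa − ∫_0^a μ1(s) ds) for a.e. a, where α := ∫_0^{a†} β(â)Π0(â)η(â) dâ ≠ 0. (This says that γ is an eigenvalue of the age operator K^a if and only if the characteristic equation 1 − K̂(γ) = 0 holds.) -/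
open MeasureTheory

/-- The natural survival probability `Π0(a) = exp(−∫_0^a μ0(s) ds)`. -/
noncomputable def Pi0 (μ0 : ℝ → ℝ) (a : ℝ) : ℝ :=
  Real.exp (-(∫ s in (0:ℝ)..a, μ0 s))

/-- The characteristic function
`K̂(γ) = ∫_0^{a†} β(a) Π0(a) exp(−∫_0^a μ1(s) ds − γ a) da`. -/
noncomputable def Khat (adag : ℝ) (β μ0 μ1 : ℝ → ℝ) (γ : ℂ) : ℂ :=
  ∫ a in (0:ℝ)..adag, ((β a * Pi0 μ0 a : ℝ) : ℂ) *
    Complex.exp (-((∫ s in (0:ℝ)..a, μ1 s : ℝ) : ℂ) - γ * a)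

/-- `η ∈ L¹([0,a†],ℂ)`, not a.e. zero, satisfies the age eigenvalue equation
`−η(a) + ∫_0^{a†} β Π0 η − ∫_0^a μ1 η = γ ∫_0^a η` for a.e. `a`. -/
def IsAgeEigenfunction (adag : ℝ) (β μ0 μ1 : ℝ → ℝ) (γ : ℂ) (η : ℝ → ℂ) : Prop :=
  IntegrableOn η (Set.Ioc 0 adag) ∧
  ¬ (η =ᵐ[volume.restrict (Set.Ioc 0 adag)] 0) ∧
  (∀ᵐ a ∂(volume.restrict (Set.Ioc 0 adag)),
    -η a + (∫ s in (0:ℝ)..adag, ((β s * Pi0 μ0 s : ℝ) : ℂ) * η s)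
      - (∫ s in (0:ℝ)..a, ((μ1 s : ℝ) : ℂ) * η s)
      = γ * ∫ s in (0:ℝ)..a, η s)

namespace AgeAux

open Set Filter Topology

/-- The primitive `∫_0^a k`. -/
noncomputable def Hk (k : ℝ → ℂ) (a : ℝ) : ℂ := ∫ s in (0:ℝ)..a, k s

variable {k : ℝ → ℂ} {Kb : ℝ}

lemma bdd_integrableOn (hk : Measurable k) (hKb : ∀ s, ‖k s‖ ≤ Kb) {s : Set ℝ}
    (hfin : volume s < ⊤) : IntegrableOn k s := by
  refine Integrable.mono' ((integrableOn_const (C := Kb) hfin.ne))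
    hk.aestronglyMeasurable.restrict ?_
  exact Eventually.of_forall fun x => hKb x

lemma intInt (hk : Measurable k) (hKb : ∀ s, ‖k s‖ ≤ Kb) (x y : ℝ) :
    IntervalIntegrable k volume x y :=
  ⟨bdd_integrableOn hk hKb measure_Ioc_lt_top, bdd_integrableOn hk hKb measure_Ioc_lt_top⟩

lemma Hk_cont (hk : Measurable k) (hKb : ∀ s, ‖k s‖ ≤ Kb) : Continuous (Hk k) :=
  intervalIntegral.continuous_primitive (fun a b => intInt hk hKb a b) 0

lemma Hk_norm_le (hKb : ∀ s, ‖k s‖ ≤ Kb) {a : ℝ} (ha : 0 ≤ a) : ‖Hk k a‖ ≤ Kb * a := by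
  have := intervalIntegral.norm_integral_le_of_norm_le_const
    (C := Kb) (f := k) (a := (0:ℝ)) (b := a) (fun x _ => hKb x)
  simpa [Hk, abs_of_nonneg ha] using this

/-- Fubini for the triangle `0 < t < s ≤ a`. -/
lemma swapTri {f g : ℝ → ℂ} {a : ℝ}
    (hf : IntegrableOn f (Ioc 0 a)) (hg : IntegrableOn g (Ioc 0 a)) :
    ∫ t in Ioc (0:ℝ) a, f t * ∫ s in Ioc t a, g s
      = ∫ s in Ioc (0:ℝ) a, (∫ t in Ioc (0:ℝ) s, f t) * g s := by
  set μ := volume.restrict (Ioc (0:ℝ) a) with hμ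
  set Φ : ℝ → ℝ → ℂ := fun t s => {p : ℝ × ℝ | p.1 < p.2}.indicator
      (fun p => f p.1 * g p.2) (t, s) with hΦdef
  have hΦint : Integrable (Function.uncurry Φ) (μ.prod μ) := by
    have : Function.uncurry Φ = {p : ℝ × ℝ | p.1 < p.2}.indicator
        (fun p => f p.1 * g p.2) := by
      funext p; cases p; rfl
    rw [this]
    exact (Integrable.mul_prod hf hg).indicator (measurableSet_lt measurable_fst measurable_snd)
  have h1 : ∫ t in Ioc (0:ℝ) a, f t * ∫ s in Ioc t a, g s = ∫ t, ∫ s, Φ t s ∂μ ∂μ := by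
    refine setIntegral_congr_fun measurableSet_Ioc (fun t ht => ?_)
    have e1 : (fun s => Φ t s) = (Ioi t).indicator (fun s => f t * g s) := by
      funext s
      simp only [hΦdef, indicator_apply, mem_setOf_eq, mem_Ioi]
    rw [e1, integral_indicator measurableSet_Ioi, hμ,
      Measure.restrict_restrict measurableSet_Ioi]
    have : Ioi t ∩ Ioc 0 a = Ioc t a := by
      ext s; simp only [mem_inter_iff, mem_Ioi, mem_Ioc]
      exact ⟨fun h => ⟨h.1, h.2.2⟩, fun h => ⟨h.1, ht.1.trans h.1, h.2⟩⟩
    rw [this, integral_const_mul]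
  have h2 : ∫ s, ∫ t, Φ t s ∂μ ∂μ = ∫ s in Ioc (0:ℝ) a, (∫ t in Ioc (0:ℝ) s, f t) * g s := by
    refine setIntegral_congr_fun measurableSet_Ioc (fun s hs => ?_)
    have e1 : (fun t => Φ t s) = (Iio s).indicator (fun t => f t * g s) := by
      funext t
      simp only [hΦdef, indicator_apply, mem_setOf_eq, mem_Iio]
    rw [e1, integral_indicator measurableSet_Iio, hμ,
      Measure.restrict_restrict measurableSet_Iio]
    have : Iio s ∩ Ioc 0 a = Ioo 0 s := by
      ext t; simp only [mem_inter_iff, mem_Iio, mem_Ioo, mem_Ioc]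
      exact ⟨fun h => ⟨h.2.1, h.1⟩, fun h => ⟨h.2, h.1, (h.2.le).trans hs.2⟩⟩
    rw [this, integral_mul_const, ← integral_Ioc_eq_integral_Ioo]
  rw [h1, integral_integral_swap hΦint, h2]

lemma mulHk_int (hk : Measurable k) (hKb : ∀ s, ‖k s‖ ≤ Kb) (F : ℂ → ℂ) (hF : Continuous F)
    {a : ℝ} : IntegrableOn (fun s => k s * F (Hk k s)) (Ioc 0 a) := by
  refine Integrable.bdd_mul ?_ hk.aestronglyMeasurable.restrict (Eventually.of_forall hKb)
  exact (hF.comp (Hk_cont hk hKb)).integrableOn_Ioc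

lemma Hk_Ioc {a : ℝ} (ha : 0 ≤ a) :
    ∫ s in Ioc (0:ℝ) a, k s = Hk k a := by
  rw [Hk, intervalIntegral.integral_of_le ha]

lemma Hk_Ioc' (hk : Measurable k) (hKb : ∀ s, ‖k s‖ ≤ Kb) {t a : ℝ} (ht : 0 ≤ t) (hta : t ≤ a) :
    ∫ s in Ioc t a, k s = Hk k a - Hk k t := by
  have := intervalIntegral.integral_add_adjacent_intervals (a := (0:ℝ)) (b := t) (c := a)
    (intInt hk hKb 0 t) (intInt hk hKb t a)
  rw [← intervalIntegral.integral_of_le hta]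
  rw [Hk, Hk, ← this]; ring

lemma Gn (hk : Measurable k) (hKb : ∀ s, ‖k s‖ ≤ Kb) {a : ℝ} (ha : 0 ≤ a) : ∀ n : ℕ,
    ∫ s in Ioc (0:ℝ) a, k s * (Hk k s) ^ n = (Hk k a) ^ (n + 1) / (n + 1) := by
  intro n; induction n generalizing a ha with
  | zero => simp [Hk_Ioc ha]
  | succ n ih =>
    have hfint : IntegrableOn (fun s => k s * (Hk k s) ^ n) (Ioc 0 a) :=
      mulHk_int hk hKb (fun z => z ^ n) (continuous_pow n)
    have hfint' : IntegrableOn (fun s => k s * (Hk k s) ^ (n+1)) (Ioc 0 a) :=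
      mulHk_int hk hKb (fun z => z ^ (n+1)) (continuous_pow (n+1))
    have hswap := swapTri (f := fun s => k s * (Hk k s) ^ n) (g := k)
      hfint (bdd_integrableOn hk hKb measure_Ioc_lt_top)
    have hL : ∫ t in Ioc (0:ℝ) a, (k t * (Hk k t) ^ n) * ∫ s in Ioc t a, k s
        = Hk k a * ((Hk k a) ^ (n+1) / (n+1)) - ∫ s in Ioc (0:ℝ) a, k s * (Hk k s) ^ (n+1) := by
      have e1 : ∀ t ∈ Ioc (0:ℝ) a, (k t * (Hk k t) ^ n) * ∫ s in Ioc t a, k s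
          = Hk k a * (k t * (Hk k t) ^ n) - k t * (Hk k t) ^ (n+1) := by
        intro t ht
        rw [Hk_Ioc' hk hKb ht.1.le ht.2]; ring
      rw [setIntegral_congr_fun measurableSet_Ioc e1, integral_sub ((hfint.const_mul _)) hfint',
        integral_const_mul, ih ha]
    have hR : ∫ s in Ioc (0:ℝ) a, (∫ t in Ioc (0:ℝ) s, k t * (Hk k t) ^ n) * k s
        = (∫ s in Ioc (0:ℝ) a, k s * (Hk k s) ^ (n+1)) / (n+1) := by
      have e1 : ∀ s ∈ Ioc (0:ℝ) a, (∫ t in Ioc (0:ℝ) s, k t * (Hk k t) ^ n) * k s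
          = (k s * (Hk k s) ^ (n+1)) / (n+1) := by
        intro s hs
        rw [ih hs.1.le]; ring
      rw [setIntegral_congr_fun measurableSet_Ioc e1, integral_div]
    rw [hL, hR] at hswap
    have hne : ((n:ℂ) + 1) + 1 ≠ 0 := by
      have : ((n:ℂ) + 1) + 1 = ((n + 2 : ℕ) : ℂ) := by push_cast; ring
      rw [this]; exact Nat.cast_ne_zero.2 (by omega)
    have hne1 : ((n:ℂ) + 1) ≠ 0 := by
      have : ((n:ℂ) + 1) = ((n + 1 : ℕ) : ℂ) := by push_cast; ring
      rw [this]; exact Nat.cast_ne_zero.2 (by omega)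
    push_cast
    push_cast at hswap
    field_simp at hswap ⊢
    linear_combination -hswap

/-- The fundamental identity `∫_0^a k e^{-∫_0^s k} = 1 - e^{-∫_0^a k}`. -/
lemma key (hk : Measurable k) (hKb : ∀ s, ‖k s‖ ≤ Kb) {a : ℝ} (ha : 0 ≤ a) :
    ∫ s in Ioc (0:ℝ) a, k s * Complex.exp (-(Hk k s)) = 1 - Complex.exp (-(Hk k a)) := by
  have hKb0 : 0 ≤ Kb := (norm_nonneg _).trans (hKb 0)
  set X := Hk k a
  set P : ℕ → ℂ → ℂ := fun n z => ∑ m ∈ Finset.range n, z ^ m / (m.factorial : ℂ) with hP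
  have hterm : ∀ m : ℕ, ∫ s in Ioc (0:ℝ) a, k s * ((-(Hk k s)) ^ m / (m.factorial : ℂ))
      = -((-X) ^ (m+1) / ((m+1).factorial : ℂ)) := by
    intro m
    have e1 : ∀ s, k s * ((-(Hk k s)) ^ m / (m.factorial : ℂ))
        = ((-1) ^ m / (m.factorial : ℂ)) * (k s * (Hk k s) ^ m) := by
      intro s; rw [neg_pow]; ring
    rw [funext e1] at *
    rw [integral_const_mul, Gn hk hKb ha m]
    have hfac : (((m+1).factorial : ℂ)) = ((m+1 : ℕ) : ℂ) * (m.factorial : ℂ) := by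
      rw [Nat.factorial_succ]; push_cast; ring
    rw [hfac, neg_pow X (m+1)]
    have h1 : ((m.factorial : ℂ)) ≠ 0 := Nat.cast_ne_zero.2 m.factorial_ne_zero
    have h2 : ((m:ℂ) + 1) ≠ 0 := by
      have : ((m:ℂ) + 1) = ((m + 1 : ℕ) : ℂ) := by push_cast; ring
      rw [this]; exact Nat.cast_ne_zero.2 (by omega)
    push_cast
    field_simp
    ring
  have hsum : ∀ n : ℕ, ∫ s in Ioc (0:ℝ) a, k s * P n (-(Hk k s)) = 1 - P (n+1) (-X) := by
    intro n
    have e1 : ∀ s, k s * P n (-(Hk k s))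
        = ∑ m ∈ Finset.range n, k s * ((-(Hk k s)) ^ m / (m.factorial : ℂ)) := by
      intro s; rw [hP, Finset.mul_sum]
    rw [funext e1, integral_finset_sum]
    · have : ∀ m ∈ Finset.range n, ∫ s in Ioc (0:ℝ) a, k s * ((-(Hk k s)) ^ m / (m.factorial : ℂ))
          = -((-X) ^ (m+1) / ((m+1).factorial : ℂ)) := fun m _ => hterm m
      rw [Finset.sum_congr rfl this]
      have e3 : P (n+1) (-X) = ∑ j ∈ Finset.range (n+1), (-X) ^ j / (j.factorial : ℂ) := rfl
      rw [e3, Finset.sum_range_succ' (fun j => (-X) ^ j / (j.factorial : ℂ)) n]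
      simp only [pow_zero, Nat.factorial_zero, Nat.cast_one, div_one]
      rw [Finset.sum_neg_distrib]
      ring
    · intro m _
      exact mulHk_int hk hKb (fun z => (-z) ^ m / (m.factorial : ℂ))
        ((continuous_neg.pow m).div_const _)
  have hlim1 : Tendsto (fun n => (1 : ℂ) - P (n+1) (-X)) atTop (𝓝 (1 - Complex.exp (-X))) := by
    have hs : Tendsto (fun n => P n (-X)) atTop (𝓝 (Complex.exp (-X))) := by
      have := (NormedSpace.expSeries_div_hasSum_exp (-X)).tendsto_sum_nat
      rw [← Complex.exp_eq_exp_ℂ] at this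
      exact this
    exact (tendsto_const_nhds.sub (hs.comp (tendsto_add_atTop_nat 1)))
  have hlim2 : Tendsto (fun n => ∫ s in Ioc (0:ℝ) a, k s * P n (-(Hk k s))) atTop
      (𝓝 (∫ s in Ioc (0:ℝ) a, k s * Complex.exp (-(Hk k s)))) := by
    refine tendsto_integral_of_dominated_convergence
      (fun _ => Kb * Real.exp (Kb * a)) ?_ ?_ ?_ ?_
    · intro n
      refine AEStronglyMeasurable.mul hk.aestronglyMeasurable.restrict ?_
      have hPc : Continuous fun z : ℂ => P n z :=
        continuous_finset_sum _ fun m _ => (continuous_pow m).div_const _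
      exact ((hPc.comp ((Hk_cont hk hKb).neg)).aestronglyMeasurable).restrict
    · exact (integrableOn_const (C := Kb * Real.exp (Kb * a)) measure_Ioc_lt_top.ne)
    · intro n
      filter_upwards [ae_restrict_mem measurableSet_Ioc] with s hs
      have h1 : ‖P n (-(Hk k s))‖ ≤ Real.exp (Kb * a) := by
        refine (norm_sum_le _ _).trans ?_
        have e2 : ∀ m ∈ Finset.range n, ‖(-(Hk k s)) ^ m / (m.factorial : ℂ)‖
            = ‖Hk k s‖ ^ m / (m.factorial : ℝ) := by
          intro m _
          rw [norm_div, norm_pow, norm_neg]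
          norm_num
        rw [Finset.sum_congr rfl e2]
        refine le_trans (Real.sum_le_exp_of_nonneg (norm_nonneg _) n) ?_
        apply Real.exp_le_exp.2
        exact (Hk_norm_le hKb hs.1.le).trans (by nlinarith [hs.2, hKb0, hs.1.le])
      calc ‖k s * P n (-(Hk k s))‖ = ‖k s‖ * ‖P n (-(Hk k s))‖ := norm_mul _ _
        _ ≤ Kb * Real.exp (Kb * a) := by
            apply mul_le_mul (hKb s) h1 (norm_nonneg _) hKb0
    · filter_upwards with s
      have hs : Tendsto (fun n => P n (-(Hk k s))) atTop (𝓝 (Complex.exp (-(Hk k s)))) := by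
        have := (NormedSpace.expSeries_div_hasSum_exp (-(Hk k s))).tendsto_sum_nat
        rw [← Complex.exp_eq_exp_ℂ] at this
        exact this
      exact hs.const_mul (k s)
  have := tendsto_nhds_unique hlim2 (by simpa [funext hsum] using hlim1)
  rw [this]

/-- Grönwall-type iteration: a solution of `‖ψ(a)‖ ≤ K ∫_0^a ‖ψ‖` vanishes a.e. -/
lemma gronwall {A K : ℝ} (hK : 0 ≤ K) {ψ : ℝ → ℂ}
    (hψ : IntegrableOn ψ (Ioc 0 A))
    (h : ∀ᵐ a ∂volume.restrict (Ioc 0 A), ‖ψ a‖ ≤ K * ∫ s in Ioc (0:ℝ) a, ‖ψ s‖) :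
    ψ =ᵐ[volume.restrict (Ioc 0 A)] 0 := by
  set I : ℝ := ∫ s in Ioc (0:ℝ) A, ‖ψ s‖ with hI
  have hInn : 0 ≤ I := integral_nonneg fun s => norm_nonneg _
  have hψn : IntegrableOn (fun s => ‖ψ s‖) (Ioc 0 A) := hψ.norm
  have main : ∀ n : ℕ, ∀ᵐ a ∂volume.restrict (Ioc 0 A),
      ‖ψ a‖ ≤ K * I * (K * a) ^ n / n.factorial := by
    intro n; induction n with
    | zero =>
      filter_upwards [h, ae_restrict_mem measurableSet_Ioc] with a ha hmem
      have h2 : ∫ s in Ioc (0:ℝ) a, ‖ψ s‖ ≤ I := by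
        refine setIntegral_mono_set hψn ?_ ?_
        · exact Eventually.of_forall fun s => norm_nonneg _
        · exact HasSubset.Subset.eventuallyLE (Ioc_subset_Ioc_right hmem.2)
      simpa using ha.trans (by nlinarith)
    | succ n ih =>
      have ih' : ∀ᵐ a ∂volume, a ∈ Ioc (0:ℝ) A → ‖ψ a‖ ≤ K * I * (K * a) ^ n / n.factorial :=
        (ae_restrict_iff' measurableSet_Ioc).1 ih
      filter_upwards [h, ae_restrict_mem measurableSet_Ioc] with a ha hmem
      have hbound : ∫ s in Ioc (0:ℝ) a, ‖ψ s‖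
          ≤ ∫ s in Ioc (0:ℝ) a, K * I * (K * s) ^ n / n.factorial := by
        refine integral_mono_ae (hψn.mono_set (Ioc_subset_Ioc_right hmem.2)) ?_ ?_
        · apply Continuous.integrableOn_Ioc; fun_prop
        · have : ∀ᵐ s ∂volume.restrict (Ioc 0 a),
              s ∈ Ioc (0:ℝ) A → ‖ψ s‖ ≤ K * I * (K * s) ^ n / n.factorial :=
            ae_restrict_of_ae ih'
          filter_upwards [this, ae_restrict_mem measurableSet_Ioc] with s hs hsmem
          exact hs ⟨hsmem.1, hsmem.2.trans hmem.2⟩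
      have hval : ∫ s in Ioc (0:ℝ) a, K * I * (K * s) ^ n / n.factorial
          = K * I * K ^ n * (a ^ (n+1) / (n+1)) / n.factorial := by
        rw [← intervalIntegral.integral_of_le hmem.1.le]
        have e1 : ∀ s, K * I * (K * s) ^ n / n.factorial
            = (K * I * K ^ n / n.factorial) * s ^ n := by
          intro s; rw [mul_pow]; ring
        rw [intervalIntegral.integral_congr (g := fun s => (K * I * K ^ n / n.factorial) * s ^ n)
          (fun s _ => e1 s), intervalIntegral.integral_const_mul, integral_pow]
        ring
      refine ha.trans ?_
      calc K * ∫ s in Ioc (0:ℝ) a, ‖ψ s‖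
          ≤ K * (K * I * K ^ n * (a ^ (n+1) / (n+1)) / n.factorial) := by
            refine mul_le_mul_of_nonneg_left (hbound.trans_eq hval) hK
        _ = K * I * (K * a) ^ (n+1) / (n+1).factorial := by
            rw [Nat.factorial_succ, mul_pow]
            push_cast
            field_simp
            ring
  have main' : ∀ᵐ a ∂volume.restrict (Ioc 0 A), ∀ n : ℕ,
      ‖ψ a‖ ≤ K * I * (K * a) ^ n / n.factorial := (ae_all_iff).2 main
  filter_upwards [main'] with a ha
  have hlim : Tendsto (fun n : ℕ => K * I * (K * a) ^ n / n.factorial) atTop (𝓝 0) := by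
    have := FloorSemiring.tendsto_pow_div_factorial_atTop (K * a)
    have h2 := this.const_mul (K * I)
    simpa [mul_div_assoc] using h2
  have : ‖ψ a‖ ≤ 0 := ge_of_tendsto hlim (Eventually.of_forall ha)
  simpa using norm_le_zero_iff.1 this

end AgeAux

/-- `γ` is an eigenvalue of the age operator `K^a` (i.e. the eigenvalue
equation has a nonzero `L¹` solution `η`) if and only if the characteristic equation
`K̂(γ) = 1` holds; moreover any such `η` is a.e. of the form
`η(a) = α exp(−γa − ∫_0^a μ1)` with `α = ∫_0^{a†} β Π0 η ≠ 0`. -/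
theorem age_operator_characteristic_equation
    (adag : ℝ) (hadag : 0 < adag) (β μ0 μ1 : ℝ → ℝ)
    (hβmeas : Measurable β) (hβnonneg : ∀ a, 0 ≤ β a) (hβbdd : ∃ C, ∀ a, β a ≤ C)
    (hμ0pos : ∀ a, 0 < μ0 a)
    (hμ0loc : ∀ b, 0 ≤ b → b < adag → IntegrableOn μ0 (Set.Icc 0 b))
    (hμ0div : ¬ IntegrableOn μ0 (Set.Ico 0 adag))
    (hμ1meas : Measurable μ1) (hμ1nonneg : ∀ a, 0 ≤ μ1 a) (hμ1bdd : ∃ C, ∀ a, μ1 a ≤ C)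
    (γ : ℂ) :
    ((∃ η : ℝ → ℂ, IsAgeEigenfunction adag β μ0 μ1 γ η) ↔ Khat adag β μ0 μ1 γ = 1) ∧
    (∀ η : ℝ → ℂ, IsAgeEigenfunction adag β μ0 μ1 γ η →
      (∫ s in (0:ℝ)..adag, ((β s * Pi0 μ0 s : ℝ) : ℂ) * η s) ≠ 0 ∧
      η =ᵐ[volume.restrict (Set.Ioc 0 adag)] fun a =>
        (∫ s in (0:ℝ)..adag, ((β s * Pi0 μ0 s : ℝ) : ℂ) * η s) *
          Complex.exp (-γ * a - ((∫ s in (0:ℝ)..a, μ1 s : ℝ) : ℂ))) := by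
  classical
  obtain ⟨C, hC⟩ := hμ1bdd
  have hC0 : 0 ≤ C := le_trans (hμ1nonneg 0) (hC 0)
  set k : ℝ → ℂ := fun s => ((μ1 s : ℂ)) + γ with hkdef
  have hkm : Measurable k := (Complex.measurable_ofReal.comp hμ1meas).add_const γ
  have hμ1norm : ∀ s, ‖((μ1 s : ℂ))‖ ≤ C := by
    intro s
    rw [Complex.norm_real, Real.norm_eq_abs, abs_of_nonneg (hμ1nonneg s)]
    exact hC s
  have hμ1m : Measurable fun s => ((μ1 s : ℂ)) := Complex.measurable_ofReal.comp hμ1meas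
  set Kb : ℝ := C + ‖γ‖ with hKbdef
  have hKb : ∀ s, ‖k s‖ ≤ Kb := by
    intro s
    refine (norm_add_le _ _).trans ?_
    exact add_le_add (hμ1norm s) le_rfl
  have hKb0 : 0 ≤ Kb := (norm_nonneg (k 0)).trans (hKb 0)
  have hμ1II : ∀ x y : ℝ, IntervalIntegrable (fun s => ((μ1 s : ℂ))) volume x y :=
    fun x y => AgeAux.intInt hμ1m hμ1norm x y
  have hHk_eq : ∀ a : ℝ, AgeAux.Hk k a = ((∫ s in (0:ℝ)..a, μ1 s : ℝ) : ℂ) + γ * a := by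
    intro a
    rw [AgeAux.Hk, hkdef]
    rw [intervalIntegral.integral_add (hμ1II 0 a) intervalIntegrable_const]
    rw [intervalIntegral.integral_ofReal, intervalIntegral.integral_const, Complex.real_smul]
    push_cast
    ring
  set e : ℝ → ℂ := fun a => Complex.exp (-(AgeAux.Hk k a)) with hedef
  have he_cont : Continuous e := Complex.continuous_exp.comp (AgeAux.Hk_cont hkm hKb).neg
  have he_eq : ∀ a : ℝ, e a = Complex.exp (-γ * a - ((∫ s in (0:ℝ)..a, μ1 s : ℝ) : ℂ)) := by
    intro a
    rw [hedef]
    simp only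
    congr 1
    rw [hHk_eq]
    ring
  have hKhat_e : ∫ s in (0:ℝ)..adag, ((β s * Pi0 μ0 s : ℝ) : ℂ) * e s
      = Khat adag β μ0 μ1 γ := by
    rw [Khat]
    refine intervalIntegral.integral_congr (fun s _ => ?_)
    rw [he_eq s]
    congr 1
    ring
  -- interval integrability from integrability on `Ioc 0 adag`
  have hII : ∀ {F : ℝ → ℂ}, IntegrableOn F (Set.Ioc 0 adag) → ∀ {x : ℝ},
      x ∈ Set.Ioc 0 adag → IntervalIntegrable F volume 0 x := by
    intro F hF x hx
    constructor
    · exact hF.mono_set (Set.Ioc_subset_Ioc_right hx.2)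
    · rw [Set.Ioc_eq_empty (by simp; linarith [hx.1])]
      exact integrableOn_empty
  -- canonical a.e. form of the eigen-equation
  have hcanon : ∀ η : ℝ → ℂ, IsAgeEigenfunction adag β μ0 μ1 γ η →
      ∀ᵐ a ∂volume.restrict (Set.Ioc 0 adag),
        η a = (∫ s in (0:ℝ)..adag, ((β s * Pi0 μ0 s : ℝ) : ℂ) * η s)
          - ∫ s in (0:ℝ)..a, k s * η s := by
    intro η hη
    have hμη : IntegrableOn (fun s => ((μ1 s : ℂ)) * η s) (Set.Ioc 0 adag) :=
      Integrable.bdd_mul hη.1 hμ1m.aestronglyMeasurable.restrict (Filter.Eventually.of_forall hμ1norm)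
    filter_upwards [hη.2.2, ae_restrict_mem measurableSet_Ioc] with a ha hmem
    have hsplit : ∫ s in (0:ℝ)..a, k s * η s
        = (∫ s in (0:ℝ)..a, ((μ1 s : ℂ)) * η s) + γ * ∫ s in (0:ℝ)..a, η s := by
      rw [intervalIntegral.integral_congr
        (g := fun s => ((μ1 s : ℂ)) * η s + γ * η s) (fun s _ => by rw [hkdef]; ring),
        intervalIntegral.integral_add (hII hμη hmem) ((hII hη.1 hmem).const_mul γ),
        intervalIntegral.integral_const_mul]
    linear_combination -ha + hsplit
  -- uniqueness of solutions of the Volterra equation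
  have huniq : ∀ (η : ℝ → ℂ) (α : ℂ), IntegrableOn η (Set.Ioc 0 adag) →
      (∀ᵐ a ∂volume.restrict (Set.Ioc 0 adag), η a = α - ∫ s in (0:ℝ)..a, k s * η s) →
      η =ᵐ[volume.restrict (Set.Ioc 0 adag)] fun a => α * e a := by
    intro η α hint heq
    have hkη : IntegrableOn (fun s => k s * η s) (Set.Ioc 0 adag) :=
      Integrable.bdd_mul hint hkm.aestronglyMeasurable.restrict (Filter.Eventually.of_forall hKb)
    have hkαe : ∀ {x : ℝ}, IntegrableOn (fun s => k s * (α * e s)) (Set.Ioc 0 x) := by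
      intro x
      exact AgeAux.mulHk_int hkm hKb (fun z => α * Complex.exp (-z))
        (continuous_const.mul (Complex.continuous_exp.comp continuous_neg))
    have hαe_int : IntegrableOn (fun a => α * e a) (Set.Ioc 0 adag) :=
      (he_cont.integrableOn_Ioc).const_mul α
    have hαekey : ∀ x : ℝ, 0 ≤ x → ∫ s in (0:ℝ)..x, k s * (α * e s) = α - α * e x := by
      intro x hx
      rw [intervalIntegral.integral_of_le hx]
      have h1 : ∫ s in Set.Ioc (0:ℝ) x, k s * (α * e s)
          = α * ∫ s in Set.Ioc (0:ℝ) x, k s * e s := by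
        rw [← integral_const_mul]
        exact setIntegral_congr_fun measurableSet_Ioc (fun s _ => by ring)
      rw [h1, hedef]
      rw [AgeAux.key hkm hKb hx]
      ring
    set ψ : ℝ → ℂ := fun a => η a - α * e a with hψdef
    have hψint : IntegrableOn ψ (Set.Ioc 0 adag) := hint.sub hαe_int
    have hkψ : IntegrableOn (fun s => k s * ψ s) (Set.Ioc 0 adag) :=
      Integrable.bdd_mul hψint hkm.aestronglyMeasurable.restrict (Filter.Eventually.of_forall hKb)
    have hψeq : ∀ᵐ a ∂volume.restrict (Set.Ioc 0 adag),
        ψ a = - ∫ s in (0:ℝ)..a, k s * ψ s := by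
      filter_upwards [heq, ae_restrict_mem measurableSet_Ioc] with a ha hmem
      have hsub : ∫ s in (0:ℝ)..a, k s * ψ s
          = (∫ s in (0:ℝ)..a, k s * η s) - ∫ s in (0:ℝ)..a, k s * (α * e s) := by
        rw [← intervalIntegral.integral_sub (hII hkη hmem)
          (hII (hkαe (x := adag)) hmem)]
        refine intervalIntegral.integral_congr (fun s _ => ?_)
        simp only [hψdef]
        ring
      simp only [hψdef]
      rw [hsub, hαekey a hmem.1.le]
      linear_combination ha
    have hnorm : ∀ᵐ a ∂volume.restrict (Set.Ioc 0 adag),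
        ‖ψ a‖ ≤ Kb * ∫ s in Set.Ioc (0:ℝ) a, ‖ψ s‖ := by
      filter_upwards [hψeq, ae_restrict_mem measurableSet_Ioc] with a ha hmem
      rw [ha, norm_neg]
      have hψII : IntervalIntegrable ψ volume 0 a := hII hψint hmem
      have hkψII : IntervalIntegrable (fun s => k s * ψ s) volume 0 a := hII hkψ hmem
      calc ‖∫ s in (0:ℝ)..a, k s * ψ s‖ ≤ ∫ s in (0:ℝ)..a, ‖k s * ψ s‖ :=
            intervalIntegral.norm_integral_le_integral_norm hmem.1.le
        _ ≤ ∫ s in (0:ℝ)..a, Kb * ‖ψ s‖ := by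
            refine intervalIntegral.integral_mono_on hmem.1.le hkψII.norm
              (hψII.norm.const_mul Kb) ?_
            intro s _
            rw [norm_mul]
            exact mul_le_mul_of_nonneg_right (hKb s) (norm_nonneg _)
        _ = Kb * ∫ s in Set.Ioc (0:ℝ) a, ‖ψ s‖ := by
            rw [intervalIntegral.integral_const_mul,
              intervalIntegral.integral_of_le hmem.1.le]
    have hz := AgeAux.gronwall hKb0 hψint hnorm
    filter_upwards [hz] with a ha
    have ha' : η a - α * e a = 0 := ha
    have := sub_eq_zero.1 ha'
    simpa using this
  -- master statement
  have hmaster : ∀ η : ℝ → ℂ, IsAgeEigenfunction adag β μ0 μ1 γ η →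
      (∫ s in (0:ℝ)..adag, ((β s * Pi0 μ0 s : ℝ) : ℂ) * η s) ≠ 0 ∧
      (η =ᵐ[volume.restrict (Set.Ioc 0 adag)] fun a =>
        (∫ s in (0:ℝ)..adag, ((β s * Pi0 μ0 s : ℝ) : ℂ) * η s) * e a) ∧
      Khat adag β μ0 μ1 γ = 1 := by
    intro η hη
    set α := ∫ s in (0:ℝ)..adag, ((β s * Pi0 μ0 s : ℝ) : ℂ) * η s with hα
    have heqae := huniq η α hη.1 (hcanon η hη)
    have hαne : α ≠ 0 := by
      intro h0
      apply hη.2.1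
      filter_upwards [heqae] with a ha
      rw [ha, h0]
      simp
    refine ⟨hαne, heqae, ?_⟩
    have heqv : ∀ᵐ x ∂volume, x ∈ Set.Ioc (0:ℝ) adag → η x = α * e x :=
      (ae_restrict_iff' measurableSet_Ioc).1 heqae
    have hcongr : α = ∫ s in (0:ℝ)..adag, ((β s * Pi0 μ0 s : ℝ) : ℂ) * (α * e s) := by
      rw [hα]
      refine intervalIntegral.integral_congr_ae' ?_ ?_
      · filter_upwards [heqv] with x hx hmem
        rw [hx hmem]
      · filter_upwards with x hx
        exact absurd (hx.1.trans_le hx.2) (by linarith)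
    have hpull : ∫ s in (0:ℝ)..adag, ((β s * Pi0 μ0 s : ℝ) : ℂ) * (α * e s)
        = α * ∫ s in (0:ℝ)..adag, ((β s * Pi0 μ0 s : ℝ) : ℂ) * e s := by
      rw [← intervalIntegral.integral_const_mul]
      exact intervalIntegral.integral_congr fun s _ => by ring
    rw [hpull, hKhat_e] at hcongr
    exact (mul_left_cancel₀ hαne (by rw [mul_one, ← hcongr])).symm
  constructor
  · constructor
    · rintro ⟨η, hη⟩
      exact (hmaster η hη).2.2
    · intro hKh
      refine ⟨e, he_cont.integrableOn_Ioc, ?_, ?_⟩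
      · intro hcon
        have hne : volume.restrict (Set.Ioc (0:ℝ) adag) ≠ 0 := by
          rw [Ne, Measure.restrict_eq_zero]
          rw [Real.volume_Ioc]
          simp only [ENNReal.ofReal_eq_zero, not_le]
          linarith
        haveI := ae_neBot.2 hne
        obtain ⟨a, ha⟩ := hcon.exists
        simp only [hedef, Pi.zero_apply] at ha
        exact Complex.exp_ne_zero _ ha
      · have hKint : ∫ s in (0:ℝ)..adag, ((β s * Pi0 μ0 s : ℝ) : ℂ) * e s = 1 := by
          rw [hKhat_e]
          exact hKh
        have hμ1e : ∀ x y : ℝ, IntervalIntegrable (fun s => ((μ1 s : ℂ)) * e s) volume x y := by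
          intro x y
          constructor <;>
            exact Integrable.bdd_mul he_cont.integrableOn_Ioc
              hμ1m.aestronglyMeasurable.restrict (Filter.Eventually.of_forall hμ1norm)
        filter_upwards [ae_restrict_mem measurableSet_Ioc] with a hmem
        have hx : (0:ℝ) ≤ a := hmem.1.le
        have hk1 : ∫ s in (0:ℝ)..a, k s * e s = 1 - e a := by
          rw [intervalIntegral.integral_of_le hx, hedef]
          exact AgeAux.key hkm hKb hx
        have hsplit : ∫ s in (0:ℝ)..a, k s * e s
            = (∫ s in (0:ℝ)..a, ((μ1 s : ℂ)) * e s) + γ * ∫ s in (0:ℝ)..a, e s := by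
          rw [intervalIntegral.integral_congr
            (g := fun s => ((μ1 s : ℂ)) * e s + γ * e s) (fun s _ => by rw [hkdef]; ring),
            intervalIntegral.integral_add (hμ1e 0 a) ((he_cont.intervalIntegrable 0 a).const_mul γ),
            intervalIntegral.integral_const_mul]
        rw [hsplit] at hk1
        linear_combination hKint - hk1
  · intro η hη
    obtain ⟨h1, h2, _⟩ := hmaster η hη
    refine ⟨h1, ?_⟩
    have hfun2 : (fun a => (∫ s in (0:ℝ)..adag, ((β s * Pi0 μ0 s : ℝ) : ℂ) * η s) *
        Complex.exp (-γ * a - ((∫ s in (0:ℝ)..a, μ1 s : ℝ) : ℂ)))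
        = fun a => (∫ s in (0:ℝ)..adag, ((β s * Pi0 μ0 s : ℝ) : ℂ) * η s) * e a := by
      funext a
      rw [he_eq a]
    rw [hfun2]
    exact h2
end

section
/- Let d > 0, let γ0 ∈ ℝ satisfy K̂(γ0) = 1, and let g0 ∈ L²(Ω,ℝ), not a.e. zero, satisfy J^x g0 = θ0 g0 for some θ0 ∈ ℝ. Set λ0 := γ0 + d(θ0 − 1) and φ0(a,x) := exp(−γ0 a − ∫_0^a μ1(s) ds) g0(x). Then φ0(0,·) = ∫_0^{a†} β(a)Π0(a)φ0(a,·) da, and for every a ∈ [0,a†], ∂_a φ0(a,·) = d(J^x φ0(a,·) − φ0(a,·)) − μ1(a)φ0(a,·) − λ0 φ0(a,·) in L²(Ω,ℝ); that is, φ0 is an eigenfunction of the generator with eigenvalue λ0. Moreover, if g0 > 0 a.e. in Ω, then φ0(a,·) > 0 a.e. for every a ∈ [0,a†], and the age-integrated function ψ0(a,x) := (∫_0^a exp(−γ0 â − ∫_0^â μ1(s) ds) dâ) g0(x) is positive a.e. for every a ∈ (0,a†]. -/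
open MeasureTheory

/-- If `K̂(γ0) = 1` and `J^x g0 = θ0 g0`, then
`φ0(a,x) = exp(−γ0 a − ∫_0^a μ1) g0(x)` is an eigenfunction of the generator with
eigenvalue `λ0 = γ0 + d(θ0 − 1)`: it satisfies the birth condition and the abstract
ODE; moreover positivity of `g0` yields positivity of `φ0(a,·)` and of the
age-integrated eigenfunction `ψ0`. Here `T` represents `J^x` on `L²(Ω,ℝ)`. -/
theorem principal_eigenfunction_dirichlet
    {n : ℕ} (Ω : Set (EuclideanSpace ℝ (Fin n)))
    (hΩne : Ω.Nonempty) (hΩo : IsOpen Ω) (hΩb : Bornology.IsBounded Ω)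
    (hΩconn : IsConnected Ω)
    (J : EuclideanSpace ℝ (Fin n) → ℝ)
    (hJcont : Continuous J) (hJsupp : HasCompactSupport J)
    (hJnonneg : ∀ x, 0 ≤ J x) (hJsymm : ∀ x, J (-x) = J x)
    (hJint : ∫ x, J x = 1) (hJ0 : 0 < J 0)
    (T : Lp ℝ 2 (volume.restrict Ω) →L[ℝ] Lp ℝ 2 (volume.restrict Ω))
    (hT : ∀ g : Lp ℝ 2 (volume.restrict Ω),
      T g =ᵐ[volume.restrict Ω] fun x => ∫ y in Ω, J (x - y) * g y)
    (adag : ℝ) (hadag : 0 < adag) (β μ0 μ1 : ℝ → ℝ)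
    (hβmeas : Measurable β) (hβnonneg : ∀ a, 0 ≤ β a) (hβbdd : ∃ C, ∀ a, β a ≤ C)
    (hμ0pos : ∀ a, 0 < μ0 a)
    (hμ0loc : ∀ b, 0 ≤ b → b < adag → IntegrableOn μ0 (Set.Icc 0 b))
    (hμ0div : ¬ IntegrableOn μ0 (Set.Ico 0 adag))
    (hμ1cont : Continuous μ1) (hμ1nonneg : ∀ a, 0 ≤ μ1 a)
    (d : ℝ) (hd : 0 < d)
    (γ0 : ℝ) (hγ0 : Khat adag β μ0 μ1 (γ0 : ℂ) = 1)
    (θ0 : ℝ) (G0 : Lp ℝ 2 (volume.restrict Ω)) (hG0ne : G0 ≠ 0)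
    (hG0eig : T G0 = θ0 • G0) :
    -- birth condition
    ((Real.exp (-γ0 * 0 - ∫ s in (0:ℝ)..(0:ℝ), μ1 s)) • G0 =
        ∫ a in (0:ℝ)..adag, (β a * Pi0 μ0 a) •
          ((Real.exp (-γ0 * a - ∫ s in (0:ℝ)..a, μ1 s)) • G0)) ∧
    -- the abstract ODE: ∂_a φ0(a,·) = d(J^x φ0 − φ0) − μ1 φ0 − λ0 φ0
    (∀ a ∈ Set.Icc (0:ℝ) adag,
      HasDerivAt (fun s : ℝ => (Real.exp (-γ0 * s - ∫ r in (0:ℝ)..s, μ1 r)) • G0)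
        (d • (T ((Real.exp (-γ0 * a - ∫ r in (0:ℝ)..a, μ1 r)) • G0)
              - (Real.exp (-γ0 * a - ∫ r in (0:ℝ)..a, μ1 r)) • G0)
          - μ1 a • ((Real.exp (-γ0 * a - ∫ r in (0:ℝ)..a, μ1 r)) • G0)
          - (γ0 + d * (θ0 - 1)) • ((Real.exp (-γ0 * a - ∫ r in (0:ℝ)..a, μ1 r)) • G0))
        a) ∧
    -- positivity of φ0(a,·) for a.e. positive g0
    ((∀ᵐ x ∂(volume.restrict Ω), 0 < G0 x) →
      (∀ a ∈ Set.Icc (0:ℝ) adag, ∀ᵐ x ∂(volume.restrict Ω),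
        0 < ((Real.exp (-γ0 * a - ∫ r in (0:ℝ)..a, μ1 r)) • G0 :
              Lp ℝ 2 (volume.restrict Ω)) x) ∧
      -- positivity of the age-integrated eigenfunction ψ0 on (0,a†]
      (∀ a ∈ Set.Ioc (0:ℝ) adag, ∀ᵐ x ∂(volume.restrict Ω),
        0 < ((∫ s in (0:ℝ)..a, Real.exp (-γ0 * s - ∫ r in (0:ℝ)..s, μ1 r)) • G0 :
              Lp ℝ 2 (volume.restrict Ω)) x)) := by

  have hprim : ∀ a : ℝ, HasDerivAt (fun s => ∫ r in (0:ℝ)..s, μ1 r) (μ1 a) a := fun a =>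
    intervalIntegral.integral_hasDerivAt_right (hμ1cont.intervalIntegrable 0 a)
      (hμ1cont.stronglyMeasurable.stronglyMeasurableAtFilter) hμ1cont.continuousAt
  have hfderiv : ∀ a : ℝ, HasDerivAt
      (fun s => Real.exp (-γ0 * s - ∫ r in (0:ℝ)..s, μ1 r))
      ((-γ0 - μ1 a) * Real.exp (-γ0 * a - ∫ r in (0:ℝ)..a, μ1 r)) a := by
    intro a
    have h1 : HasDerivAt (fun s : ℝ => -γ0 * s - ∫ r in (0:ℝ)..s, μ1 r) (-γ0 - μ1 a) a := by
      have := ((hasDerivAt_id a).const_mul (-γ0)).sub (hprim a)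
      exact this.congr_deriv (by ring)
    simpa [mul_comm] using h1.exp
  have hfcont : Continuous (fun s => Real.exp (-γ0 * s - ∫ r in (0:ℝ)..s, μ1 r)) :=
    continuous_iff_continuousAt.mpr fun a => (hfderiv a).continuousAt
  have key : (∫ a in (0:ℝ)..adag,
      β a * Pi0 μ0 a * Real.exp (-γ0 * a - ∫ s in (0:ℝ)..a, μ1 s)) = 1 := by
    have h : Khat adag β μ0 μ1 (γ0 : ℂ) =
        ((∫ a in (0:ℝ)..adag,
          β a * Pi0 μ0 a * Real.exp (-γ0 * a - ∫ s in (0:ℝ)..a, μ1 s) : ℝ) : ℂ) := by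
      rw [Khat, ← intervalIntegral.integral_ofReal]
      apply intervalIntegral.integral_congr
      intro a _
      simp only [Complex.ofReal_mul, Complex.ofReal_exp]
      congr 1
      push_cast
      ring
    rw [h] at hγ0
    exact_mod_cast hγ0
  refine ⟨?_, ?_, ?_⟩
  · calc (Real.exp (-γ0 * 0 - ∫ s in (0:ℝ)..(0:ℝ), μ1 s)) • G0
        = (1:ℝ) • G0 := by norm_num
      _ = (∫ a in (0:ℝ)..adag,
            β a * Pi0 μ0 a * Real.exp (-γ0 * a - ∫ s in (0:ℝ)..a, μ1 s)) • G0 := by rw [key]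
      _ = ∫ a in (0:ℝ)..adag,
            (β a * Pi0 μ0 a * Real.exp (-γ0 * a - ∫ s in (0:ℝ)..a, μ1 s)) • G0 :=
          (intervalIntegral.integral_smul_const _ _).symm
      _ = ∫ a in (0:ℝ)..adag, (β a * Pi0 μ0 a) •
            ((Real.exp (-γ0 * a - ∫ s in (0:ℝ)..a, μ1 s)) • G0) := by
          simp [smul_smul]
  · intro a _
    have hT' : T ((Real.exp (-γ0 * a - ∫ r in (0:ℝ)..a, μ1 r)) • G0)
        = Real.exp (-γ0 * a - ∫ r in (0:ℝ)..a, μ1 r) • (θ0 • G0) := by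
      rw [ContinuousLinearMap.map_smul, hG0eig]
    have hd0 := (hfderiv a).smul_const G0
    refine hd0.congr_deriv ?_
    rw [hT']
    module
  · intro hpos
    constructor
    · intro a _
      filter_upwards [hpos,
        Lp.coeFn_smul (Real.exp (-γ0 * a - ∫ r in (0:ℝ)..a, μ1 r)) G0] with x hx h2
      rw [h2]
      exact mul_pos (Real.exp_pos _) hx
    · intro a ha
      have hcpos : 0 < ∫ s in (0:ℝ)..a, Real.exp (-γ0 * s - ∫ r in (0:ℝ)..s, μ1 r) :=
        intervalIntegral.intervalIntegral_pos_of_pos_on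
          (hfcont.intervalIntegrable 0 a)
          (fun x _ => Real.exp_pos _) ha.1
      filter_upwards [hpos,
        Lp.coeFn_smul (∫ s in (0:ℝ)..a, Real.exp (-γ0 * s - ∫ r in (0:ℝ)..s, μ1 r)) G0]
        with x hx h2
      rw [h2]
      exact mul_pos hcpos hx
end

section
/- Let N ∈ ℕ and let γ ∈ ℂ be such that the collocation problem with right-hand side α = 1 (find a complex polynomial q_N of degree at most N−1 with q_N(a_i) + ∫_0^{a_i}(γ+μ1(s))q_N(s) ds = 1 for i = 1,…,N) admits a unique solution q_N(·;γ,1). Then γ is an eigenvalue of the N×N matrix K_N if and only if ∫_0^{a†} β(a)Π0(a) q_N(a;γ,1) da = 1, i.e., if and only if the discrete characteristic equation 1 − K̂_N(γ) = 0 holds. -/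
open MeasureTheory

/-- The Chebyshev zero nodes `a_i = (a†/2)(1 + cos((2i−1)π/(2N)))`, `i = 1,…,N`,
in `[0,a†]`. -/
noncomputable def chebNode (adag : ℝ) (N : ℕ) (i : ℕ) : ℝ :=
  (adag / 2) * (1 + Real.cos ((2 * (i : ℝ) - 1) * Real.pi / (2 * (N : ℝ))))

/-- The collocation nodes `a_0 = 0, a_1, …, a_N`. -/
noncomputable def allNodes (adag : ℝ) (N : ℕ) (j : ℕ) : ℝ :=
  if j = 0 then 0 else chebNode adag N j

/-- The Lagrange basis polynomial `ℓ_{N,h}` of degree `N` for the nodes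
`a_0, a_1, …, a_N`. -/
noncomputable def lagrangeBasisPoly (adag : ℝ) (N : ℕ) (h : ℕ) : Polynomial ℝ :=
  Lagrange.basis (Finset.range (N + 1)) (allNodes adag N) h

/-- The collocation matrix `K_N` with entries
`(K_N)_{i,h} = −ℓ'_{N,h}(a_i) + ∫_0^{a†} β Π0 ℓ'_{N,h} − ∫_0^{a_i} μ1 ℓ'_{N,h}`. -/
noncomputable def collocationMatrix (adag : ℝ) (β μ0 μ1 : ℝ → ℝ) (N : ℕ) :
    Matrix (Fin N) (Fin N) ℝ :=
  fun i h =>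
    -((lagrangeBasisPoly adag N ((h : ℕ) + 1)).derivative.eval (chebNode adag N ((i : ℕ) + 1)))
    + (∫ a in (0:ℝ)..adag,
        β a * Pi0 μ0 a * (lagrangeBasisPoly adag N ((h : ℕ) + 1)).derivative.eval a)
    - ∫ a in (0:ℝ)..(chebNode adag N ((i : ℕ) + 1)),
        μ1 a * (lagrangeBasisPoly adag N ((h : ℕ) + 1)).derivative.eval a

/-- A collocation solution with right-hand side `α`: a complex polynomial of degree at
most `N−1` with `q_N(a_i) + ∫_0^{a_i} (γ + μ1(s)) q_N(s) ds = α` at all Chebyshev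
nodes. -/
def IsCollocationSolution (adag : ℝ) (μ1 : ℝ → ℝ) (γ α : ℂ) (N : ℕ)
    (q : Polynomial ℂ) : Prop :=
  q.degree < (N : ℕ) ∧
  ∀ i ∈ Finset.Icc 1 N,
    q.eval ((chebNode adag N i : ℝ) : ℂ)
      + ∫ s in (0:ℝ)..(chebNode adag N i), (γ + (μ1 s : ℂ)) * q.eval ((s : ℝ) : ℂ) = α

section Nodes

variable {adag : ℝ} {N : ℕ}

lemma theta_mem {i : ℕ} (h1 : 1 ≤ i) (hiN : i ≤ N) :
    (2 * (i : ℝ) - 1) * Real.pi / (2 * (N : ℝ)) ∈ Set.Icc 0 Real.pi := by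
  have hN : (1:ℝ) ≤ N := by exact_mod_cast h1.trans hiN
  have hi1 : (1:ℝ) ≤ (i:ℝ) := by exact_mod_cast h1
  have hiN' : (i:ℝ) ≤ (N:ℝ) := by exact_mod_cast hiN
  have hpi := Real.pi_pos
  constructor
  · apply div_nonneg (by nlinarith) (by linarith)
  · rw [div_le_iff₀ (by linarith)]
    nlinarith

lemma theta_lt {i j : ℕ} (h1 : 1 ≤ i) (hij : i < j) (hjN : j ≤ N) :
    (2 * (i : ℝ) - 1) * Real.pi / (2 * (N : ℝ)) <
      (2 * (j : ℝ) - 1) * Real.pi / (2 * (N : ℝ)) := by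
  have hN : (1:ℝ) ≤ N := by exact_mod_cast (h1.trans hij.le).trans hjN
  have hij' : (i:ℝ) < (j:ℝ) := by exact_mod_cast hij
  have hpi := Real.pi_pos
  rw [div_lt_div_iff_of_pos_right (by linarith)]
  nlinarith

lemma theta_pos {i : ℕ} (h1 : 1 ≤ i) (hiN : i ≤ N) :
    0 < (2 * (i : ℝ) - 1) * Real.pi / (2 * (N : ℝ)) := by
  have hN : (1:ℝ) ≤ N := by exact_mod_cast h1.trans hiN
  have hi1 : (1:ℝ) ≤ (i:ℝ) := by exact_mod_cast h1
  have hpi := Real.pi_pos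
  apply div_pos (by nlinarith) (by linarith)

lemma theta_lt_pi {i : ℕ} (h1 : 1 ≤ i) (hiN : i ≤ N) :
    (2 * (i : ℝ) - 1) * Real.pi / (2 * (N : ℝ)) < Real.pi := by
  have hN : (1:ℝ) ≤ N := by exact_mod_cast h1.trans hiN
  have hiN' : (i:ℝ) ≤ (N:ℝ) := by exact_mod_cast hiN
  have hpi := Real.pi_pos
  rw [div_lt_iff₀ (by linarith)]
  nlinarith

lemma chebNode_mem (hadag : 0 < adag) {i : ℕ} (h1 : 1 ≤ i) (hiN : i ≤ N) :
    chebNode adag N i ∈ Set.Ioo 0 adag := by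
  have hθ := theta_mem (N := N) h1 hiN
  have hc1 : Real.cos ((2 * (i : ℝ) - 1) * Real.pi / (2 * (N : ℝ))) < Real.cos 0 :=
    Real.strictAntiOn_cos (Set.left_mem_Icc.mpr Real.pi_pos.le) hθ (theta_pos h1 hiN)
  have hc2 : Real.cos Real.pi < Real.cos ((2 * (i : ℝ) - 1) * Real.pi / (2 * (N : ℝ))) :=
    Real.strictAntiOn_cos hθ (Set.right_mem_Icc.mpr Real.pi_pos.le) (theta_lt_pi h1 hiN)
  rw [Real.cos_zero] at hc1
  rw [Real.cos_pi] at hc2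
  unfold chebNode
  constructor
  · nlinarith
  · nlinarith

lemma chebNode_anti (hadag : 0 < adag) {i j : ℕ} (h1 : 1 ≤ i) (hij : i < j) (hjN : j ≤ N) :
    chebNode adag N j < chebNode adag N i := by
  have h1j : 1 ≤ j := h1.trans hij.le
  have hiN : i ≤ N := hij.le.trans hjN
  have hc : Real.cos ((2 * (j : ℝ) - 1) * Real.pi / (2 * (N : ℝ))) <
      Real.cos ((2 * (i : ℝ) - 1) * Real.pi / (2 * (N : ℝ))) :=
    Real.strictAntiOn_cos (theta_mem h1 hiN) (theta_mem h1j hjN) (theta_lt h1 hij hjN)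
  unfold chebNode
  nlinarith

lemma nodes_ne (hadag : 0 < adag) {i j : ℕ} (hj : j < N + 1) (hlt : i < j) :
    allNodes adag N i ≠ allNodes adag N j := by
  have hj1 : 1 ≤ j := by omega
  have hjN : j ≤ N := by omega
  rcases Nat.eq_zero_or_pos i with h0 | hi1
  · subst h0
    have := (chebNode_mem hadag hj1 hjN).1
    intro h
    rw [allNodes, allNodes, if_pos rfl, if_neg (by omega : ¬ j = 0)] at h
    exact this.ne' h.symm
  · have := chebNode_anti hadag hi1 hlt hjN
    simp only [allNodes, if_neg (by omega : ¬ i = 0), if_neg (by omega : ¬ j = 0)]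
    intro h; linarith [h ▸ this]

lemma nodes_injOn (hadag : 0 < adag) :
    Set.InjOn (allNodes adag N) (Finset.range (N + 1)) := by
  intro i hi j hj hij
  simp only [Finset.coe_range, Set.mem_Iio] at hi hj
  rcases lt_trichotomy i j with h | h | h
  · exact absurd hij (nodes_ne hadag hj h)
  · exact h
  · exact absurd hij.symm (nodes_ne hadag hi h)

end Nodes

section Basis

open Polynomial

variable {adag : ℝ} {N : ℕ}

lemma lb_degree (hadag : 0 < adag) {h : ℕ} (hh : h ∈ Finset.range (N + 1)) :
    (lagrangeBasisPoly adag N h).degree = N := by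
  rw [lagrangeBasisPoly, Lagrange.degree_basis (nodes_injOn hadag) hh,
    Finset.card_range]
  simp

lemma lb_ne_zero (hadag : 0 < adag) {h : ℕ} (hh : h ∈ Finset.range (N + 1)) :
    lagrangeBasisPoly adag N h ≠ 0 :=
  Lagrange.basis_ne_zero (nodes_injOn hadag) hh

lemma lb_eval (hadag : 0 < adag) {h j : ℕ} (hh : h ∈ Finset.range (N + 1))
    (hj : j ∈ Finset.range (N + 1)) :
    (lagrangeBasisPoly adag N h).eval (allNodes adag N j) = if h = j then 1 else 0 := by
  rcases eq_or_ne h j with rfl | hne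
  · rw [if_pos rfl, lagrangeBasisPoly, Lagrange.eval_basis_self (nodes_injOn hadag) hh]
  · rw [if_neg hne, lagrangeBasisPoly, Lagrange.eval_basis_of_ne hne hj]

/-- evaluation of a mapped real polynomial at a real point -/
lemma eval_map_ofReal (p : Polynomial ℝ) (x : ℝ) :
    (p.map (algebraMap ℝ ℂ)).eval ((x : ℝ) : ℂ) = ((p.eval x : ℝ) : ℂ) := by
  rw [Polynomial.eval_map]
  exact Polynomial.eval₂_at_apply (algebraMap ℝ ℂ) x

/-- FTC for complex polynomials along the real line -/
lemma poly_integral_C (p : Polynomial ℂ) (a b : ℝ) :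
    (∫ x in a..b, p.derivative.eval ((x : ℝ) : ℂ)) = p.eval ((b : ℝ) : ℂ) - p.eval ((a : ℝ) : ℂ) := by
  apply intervalIntegral.integral_eq_sub_of_hasDerivAt
  · intro x _
    exact (Polynomial.hasDerivAt p ((x : ℝ) : ℂ)).comp_ofReal
  · exact ((p.derivative.continuous_aeval.comp Complex.continuous_ofReal)).intervalIntegrable a b

end Basis

section Meas

variable {adag : ℝ} {β μ0 μ1 : ℝ → ℝ}

lemma Pi0_pos (μ0 : ℝ → ℝ) (a : ℝ) : 0 < Pi0 μ0 a := Real.exp_pos _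

lemma Pi0_le_one (hμ0pos : ∀ a, 0 < μ0 a) {a : ℝ} (ha : 0 ≤ a) : Pi0 μ0 a ≤ 1 := by
  rw [Pi0, Real.exp_le_one_iff, neg_nonpos]
  exact intervalIntegral.integral_nonneg ha (fun u _ => (hμ0pos u).le)

lemma primitive_contOn (hadag : 0 < adag)
    (hμ0loc : ∀ b, 0 ≤ b → b < adag → IntegrableOn μ0 (Set.Icc 0 b)) :
    ContinuousOn (fun a => ∫ s in (0:ℝ)..a, μ0 s) (Set.Ico 0 adag) := by
  intro x hx
  set b := (x + adag) / 2 with hb_def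
  have hxb : x < b := by simp only [hb_def]; linarith [hx.2]
  have hb : b < adag := by simp only [hb_def]; linarith [hx.2]
  have hb0 : 0 ≤ b := le_of_lt (lt_of_le_of_lt hx.1 hxb)
  have hcont : ContinuousOn (fun a => ∫ s in (0:ℝ)..a, μ0 s) (Set.uIcc 0 b) := by
    apply intervalIntegral.continuousOn_primitive_interval
    rw [Set.uIcc_of_le hb0]
    exact hμ0loc b hb0 hb
  rw [Set.uIcc_of_le hb0] at hcont
  have hmem : Set.Icc 0 b ∈ nhdsWithin x (Set.Ico 0 adag) := by
    apply Filter.mem_of_superset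
      (inter_mem_nhdsWithin (Set.Ico 0 adag) (Iio_mem_nhds hxb))
    rintro y ⟨hy1, hy2⟩
    exact ⟨hy1.1, le_of_lt hy2⟩
  exact (hcont x ⟨hx.1, hxb.le⟩).mono_of_mem_nhdsWithin hmem

lemma betaPi_aesm (hadag : 0 < adag) (hβmeas : Measurable β)
    (hμ0loc : ∀ b, 0 ≤ b → b < adag → IntegrableOn μ0 (Set.Icc 0 b)) :
    AEStronglyMeasurable (fun a => β a * Pi0 μ0 a)
      (volume.restrict (Set.Ioc 0 adag)) := by
  have hPi : ContinuousOn (fun a => Pi0 μ0 a) (Set.Ico 0 adag) := by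
    apply Real.continuous_exp.comp_continuousOn
    exact (primitive_contOn hadag hμ0loc).neg
  have hPi' : AEStronglyMeasurable (fun a => Pi0 μ0 a)
      (volume.restrict (Set.Ico 0 adag)) :=
    hPi.aestronglyMeasurable measurableSet_Ico
  have heq : volume.restrict (Set.Ioc 0 adag) = volume.restrict (Set.Ico 0 adag) :=
    Measure.restrict_congr_set (Ioc_ae_eq_Icc.trans Ico_ae_eq_Icc.symm)
  rw [heq]
  exact hβmeas.aestronglyMeasurable.restrict.mul hPi'

/-- interval integrability of `β Π0 φ` for continuous complex `φ` -/
lemma int_betaC (hadag : 0 < adag) (hβmeas : Measurable β) (hβnonneg : ∀ a, 0 ≤ β a)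
    (hβbdd : ∃ C, ∀ a, β a ≤ C) (hμ0pos : ∀ a, 0 < μ0 a)
    (hμ0loc : ∀ b, 0 ≤ b → b < adag → IntegrableOn μ0 (Set.Icc 0 b))
    {φ : ℝ → ℂ} (hφ : Continuous φ) :
    IntervalIntegrable (fun a => ((β a * Pi0 μ0 a : ℝ) : ℂ) * φ a) volume 0 adag := by
  obtain ⟨C, hC⟩ := hβbdd
  obtain ⟨M, hM⟩ := (isCompact_Icc (a := (0:ℝ)) (b := adag)).exists_bound_of_continuousOn
    hφ.continuousOn
  rw [intervalIntegrable_iff, Set.uIoc_of_le hadag.le]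
  have haesm : AEStronglyMeasurable (fun a => ((β a * Pi0 μ0 a : ℝ) : ℂ) * φ a)
      (volume.restrict (Set.Ioc 0 adag)) :=
    ((Complex.continuous_ofReal.comp_aestronglyMeasurable
      (betaPi_aesm hadag hβmeas hμ0loc)).mul hφ.aestronglyMeasurable.restrict)
  apply Integrable.mono' (integrable_const (C * max M 0)) haesm
  filter_upwards [ae_restrict_mem measurableSet_Ioc] with a ha
  have h1 : ‖((β a * Pi0 μ0 a : ℝ) : ℂ)‖ ≤ C := by
    rw [Complex.norm_real, Real.norm_eq_abs, abs_of_nonneg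
      (mul_nonneg (hβnonneg a) (Pi0_pos μ0 a).le)]
    calc β a * Pi0 μ0 a ≤ β a * 1 :=
          mul_le_mul_of_nonneg_left (Pi0_le_one hμ0pos ha.1.le) (hβnonneg a)
      _ = β a := mul_one _
      _ ≤ C := hC a
  have h2 : ‖φ a‖ ≤ max M 0 :=
    le_max_of_le_left (hM a ⟨ha.1.le, ha.2⟩)
  calc ‖((β a * Pi0 μ0 a : ℝ) : ℂ) * φ a‖ = ‖((β a * Pi0 μ0 a : ℝ) : ℂ)‖ * ‖φ a‖ := norm_mul _ _
    _ ≤ C * max M 0 := mul_le_mul h1 h2 (norm_nonneg _) ((norm_nonneg _).trans h1)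

/-- interval integrability of `μ1 φ` for continuous complex `φ` on any interval -/
lemma int_mu1C (hμ1meas : Measurable μ1) (hμ1nonneg : ∀ a, 0 ≤ μ1 a)
    (hμ1bdd : ∃ C, ∀ a, μ1 a ≤ C) {φ : ℝ → ℂ} (hφ : Continuous φ) (a b : ℝ) :
    IntervalIntegrable (fun s => ((μ1 s : ℝ) : ℂ) * φ s) volume a b := by
  obtain ⟨C, hC⟩ := hμ1bdd
  obtain ⟨M, hM⟩ := (isCompact_uIcc (a := a) (b := b)).exists_bound_of_continuousOn
    hφ.continuousOn
  rw [intervalIntegrable_iff, Set.uIoc]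
  have haesm : AEStronglyMeasurable (fun s => ((μ1 s : ℝ) : ℂ) * φ s)
      (volume.restrict (Set.Ioc (a ⊓ b) (a ⊔ b))) :=
    ((Complex.measurable_ofReal.comp hμ1meas).aestronglyMeasurable.restrict.mul
      hφ.aestronglyMeasurable.restrict)
  apply Integrable.mono' (integrable_const (C * max M 0)) haesm
  filter_upwards [ae_restrict_mem measurableSet_Ioc] with s hs
  have h1 : ‖((μ1 s : ℝ) : ℂ)‖ ≤ C := by
    rw [Complex.norm_real, Real.norm_eq_abs, abs_of_nonneg (hμ1nonneg s)]
    exact hC s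
  have h2 : ‖φ s‖ ≤ max M 0 :=
    le_max_of_le_left (hM s (by rw [Set.uIcc]; exact Set.Ioc_subset_Icc_self hs))
  calc ‖((μ1 s : ℝ) : ℂ) * φ s‖ = ‖((μ1 s : ℝ) : ℂ)‖ * ‖φ s‖ := norm_mul _ _
    _ ≤ C * max M 0 := mul_le_mul h1 h2 (norm_nonneg _) ((norm_nonneg _).trans h1)

end Meas

section Bridge

open Polynomial

variable {adag : ℝ} {N : ℕ} {β μ0 μ1 : ℝ → ℝ}

/-- complexified Lagrange basis polynomial -/
noncomputable def Lc (adag : ℝ) (N h : ℕ) : Polynomial ℂ :=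
  (lagrangeBasisPoly adag N h).map (algebraMap ℝ ℂ)

/-- the polynomial associated to a vector -/
noncomputable def Qv (adag : ℝ) (N : ℕ) (v : Fin N → ℂ) : Polynomial ℂ :=
  ∑ h : Fin N, Polynomial.C (v h) * (Lc adag N ((h : ℕ) + 1)).derivative

lemma Lc_eval (hadag : 0 < adag) {h j : ℕ} (hh : h ∈ Finset.range (N + 1))
    (hj : j ∈ Finset.range (N + 1)) :
    (Lc adag N h).eval ((allNodes adag N j : ℝ) : ℂ) = if h = j then 1 else 0 := by
  rw [Lc, eval_map_ofReal, lb_eval hadag hh hj]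
  split_ifs <;> simp

lemma Lc_deriv_eval (h : ℕ) (x : ℝ) :
    (Lc adag N h).derivative.eval ((x : ℝ) : ℂ)
      = (((lagrangeBasisPoly adag N h).derivative.eval x : ℝ) : ℂ) := by
  rw [Lc, Polynomial.derivative_map, eval_map_ofReal]

lemma Lc_ne_zero (hadag : 0 < adag) {h : ℕ} (hh : h ∈ Finset.range (N + 1)) :
    Lc adag N h ≠ 0 :=
  Polynomial.map_ne_zero (lb_ne_zero hadag hh)

lemma Lc_degree (hadag : 0 < adag) {h : ℕ} (hh : h ∈ Finset.range (N + 1)) :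
    (Lc adag N h).degree = N := by
  rw [Lc, Polynomial.degree_map_eq_of_injective (algebraMap ℝ ℂ).injective,
    lb_degree hadag hh]

lemma mem_range_succ (h : Fin N) : (h : ℕ) + 1 ∈ Finset.range (N + 1) :=
  Finset.mem_range.mpr (Nat.succ_lt_succ h.isLt)

lemma Qv_eval (v : Fin N → ℂ) (x : ℝ) :
    (Qv adag N v).eval ((x : ℝ) : ℂ)
      = ∑ h : Fin N,
          (((lagrangeBasisPoly adag N ((h : ℕ) + 1)).derivative.eval x : ℝ) : ℂ) * v h := by
  rw [Qv, Polynomial.eval_finset_sum]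
  exact Finset.sum_congr rfl fun h _ => by
    rw [Polynomial.eval_mul, Polynomial.eval_C, Lc_deriv_eval, mul_comm]

lemma Qv_degree (hadag : 0 < adag) (v : Fin N → ℂ) :
    (Qv adag N v).degree < (N : ℕ) := by
  apply lt_of_le_of_lt (Polynomial.degree_sum_le _ _)
  refine (Finset.sup_lt_iff (WithBot.bot_lt_coe N)).mpr fun h _ => ?_
  have h1 : (Lc adag N ((h : ℕ) + 1)).derivative.degree < N := by
    rw [← Lc_degree hadag (mem_range_succ h)]
    exact Polynomial.degree_derivative_lt (Lc_ne_zero hadag (mem_range_succ h))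
  calc (Polynomial.C (v h) * (Lc adag N ((h : ℕ) + 1)).derivative).degree
      ≤ (Polynomial.C (v h)).degree + (Lc adag N ((h : ℕ) + 1)).derivative.degree :=
        Polynomial.degree_mul_le _ _
    _ ≤ 0 + (Lc adag N ((h : ℕ) + 1)).derivative.degree :=
        add_le_add Polynomial.degree_C_le le_rfl
    _ = (Lc adag N ((h : ℕ) + 1)).derivative.degree := zero_add _
    _ < N := h1

lemma P_eval_node (hadag : 0 < adag) (v : Fin N → ℂ) (i : Fin N) :
    (∑ h : Fin N, Polynomial.C (v h) * Lc adag N ((h : ℕ) + 1)).eval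
      ((chebNode adag N ((i : ℕ) + 1) : ℝ) : ℂ) = v i := by
  have hx : chebNode adag N ((i : ℕ) + 1) = allNodes adag N ((i : ℕ) + 1) := by
    rw [allNodes, if_neg (by omega)]
  rw [hx, Polynomial.eval_finset_sum]
  have key : ∀ h : Fin N, (Polynomial.C (v h) * Lc adag N ((h : ℕ) + 1)).eval
      ((allNodes adag N ((i : ℕ) + 1) : ℝ) : ℂ) = if h = i then v h else 0 := by
    intro h
    rw [Polynomial.eval_mul, Polynomial.eval_C,
      Lc_eval hadag (mem_range_succ h) (mem_range_succ i)]
    by_cases hh : h = i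
    · subst hh; rw [if_pos rfl, if_pos rfl, mul_one]
    · rw [if_neg (fun hc => hh (Fin.ext (by omega))), if_neg hh, mul_zero]
  rw [Finset.sum_congr rfl fun h _ => key h]
  simp

lemma P_eval_zero (hadag : 0 < adag) (v : Fin N → ℂ) :
    (∑ h : Fin N, Polynomial.C (v h) * Lc adag N ((h : ℕ) + 1)).eval (((0:ℝ) : ℝ) : ℂ)
      = 0 := by
  have hx : (0 : ℝ) = allNodes adag N 0 := by rw [allNodes, if_pos rfl]
  rw [hx, Polynomial.eval_finset_sum]
  apply Finset.sum_eq_zero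
  intro h _
  rw [Polynomial.eval_mul, Polynomial.eval_C,
    Lc_eval hadag (mem_range_succ h) (Finset.mem_range.mpr (Nat.succ_pos N)),
    if_neg (by omega), mul_zero]

lemma Qv_derivative (v : Fin N → ℂ) :
    Qv adag N v = (∑ h : Fin N, Polynomial.C (v h) * Lc adag N ((h : ℕ) + 1)).derivative := by
  rw [Polynomial.derivative_sum, Qv]
  exact Finset.sum_congr rfl fun h _ => (Polynomial.derivative_C_mul _ _).symm

/-- Lemma B: the integral of `Qv` up to the `i`-th node recovers `v i`. -/
lemma Qv_int (hadag : 0 < adag) (v : Fin N → ℂ) (i : Fin N) :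
    (∫ s in (0:ℝ)..(chebNode adag N ((i : ℕ) + 1)), (Qv adag N v).eval ((s : ℝ) : ℂ))
      = v i := by
  rw [Qv_derivative, poly_integral_C, P_eval_node hadag v i, P_eval_zero hadag v, sub_zero]

end Bridge

section Sums

open Polynomial

variable {adag : ℝ} {N : ℕ} {β μ0 μ1 : ℝ → ℝ}

lemma cont_eval (p : Polynomial ℂ) : Continuous fun s : ℝ => p.eval ((s : ℝ) : ℂ) :=
  (Polynomial.continuous p).comp Complex.continuous_ofReal

lemma cont_lc (h : Fin N) (c : ℂ) :
    Continuous fun a : ℝ =>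
      (((lagrangeBasisPoly adag N ((h : ℕ) + 1)).derivative.eval a : ℝ) : ℂ) * c :=
  ((Complex.continuous_ofReal.comp
    (Polynomial.continuous _)).mul continuous_const)

lemma sum_int_beta (hadag : 0 < adag) (hβmeas : Measurable β) (hβnonneg : ∀ a, 0 ≤ β a)
    (hβbdd : ∃ C, ∀ a, β a ≤ C) (hμ0pos : ∀ a, 0 < μ0 a)
    (hμ0loc : ∀ b, 0 ≤ b → b < adag → IntegrableOn μ0 (Set.Icc 0 b))
    (v : Fin N → ℂ) :
    (∑ h : Fin N, ((∫ a in (0:ℝ)..adag,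
        β a * Pi0 μ0 a * (lagrangeBasisPoly adag N ((h : ℕ) + 1)).derivative.eval a : ℝ) : ℂ)
          * v h)
      = ∫ a in (0:ℝ)..adag, ((β a * Pi0 μ0 a : ℝ) : ℂ) * (Qv adag N v).eval ((a : ℝ) : ℂ) := by
  have step1 : ∀ h : Fin N, ((∫ a in (0:ℝ)..adag,
      β a * Pi0 μ0 a * (lagrangeBasisPoly adag N ((h : ℕ) + 1)).derivative.eval a : ℝ) : ℂ)
        * v h
      = ∫ a in (0:ℝ)..adag, ((β a * Pi0 μ0 a : ℝ) : ℂ) *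
          ((((lagrangeBasisPoly adag N ((h : ℕ) + 1)).derivative.eval a : ℝ) : ℂ) * v h) := by
    intro h
    rw [← intervalIntegral.integral_ofReal, ← intervalIntegral.integral_mul_const]
    apply intervalIntegral.integral_congr
    intro a _
    push_cast
    ring
  rw [Finset.sum_congr rfl fun h _ => step1 h]
  rw [← intervalIntegral.integral_finset_sum
    (fun h _ => int_betaC hadag hβmeas hβnonneg hβbdd hμ0pos hμ0loc (cont_lc h (v h)))]
  apply intervalIntegral.integral_congr
  intro a _
  simp only [Qv_eval, Finset.mul_sum]

lemma sum_int_mu1 (hμ1meas : Measurable μ1) (hμ1nonneg : ∀ a, 0 ≤ μ1 a)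
    (hμ1bdd : ∃ C, ∀ a, μ1 a ≤ C) (v : Fin N → ℂ) (c : ℝ) :
    (∑ h : Fin N, ((∫ s in (0:ℝ)..c,
        μ1 s * (lagrangeBasisPoly adag N ((h : ℕ) + 1)).derivative.eval s : ℝ) : ℂ) * v h)
      = ∫ s in (0:ℝ)..c, ((μ1 s : ℝ) : ℂ) * (Qv adag N v).eval ((s : ℝ) : ℂ) := by
  have step1 : ∀ h : Fin N, ((∫ s in (0:ℝ)..c,
      μ1 s * (lagrangeBasisPoly adag N ((h : ℕ) + 1)).derivative.eval s : ℝ) : ℂ) * v h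
      = ∫ s in (0:ℝ)..c, ((μ1 s : ℝ) : ℂ) *
          ((((lagrangeBasisPoly adag N ((h : ℕ) + 1)).derivative.eval s : ℝ) : ℂ) * v h) := by
    intro h
    rw [← intervalIntegral.integral_ofReal, ← intervalIntegral.integral_mul_const]
    apply intervalIntegral.integral_congr
    intro s _
    push_cast
    ring
  rw [Finset.sum_congr rfl fun h _ => step1 h]
  rw [← intervalIntegral.integral_finset_sum
    (fun h _ => int_mu1C hμ1meas hμ1nonneg hμ1bdd (cont_lc h (v h)) 0 c)]
  apply intervalIntegral.integral_congr
  intro s _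
  simp only [Qv_eval, Finset.mul_sum]

/-- Lemma A: the action of the collocation matrix in terms of `Qv`. -/
lemma mulVec_eq (hadag : 0 < adag) (hβmeas : Measurable β) (hβnonneg : ∀ a, 0 ≤ β a)
    (hβbdd : ∃ C, ∀ a, β a ≤ C) (hμ0pos : ∀ a, 0 < μ0 a)
    (hμ0loc : ∀ b, 0 ≤ b → b < adag → IntegrableOn μ0 (Set.Icc 0 b))
    (hμ1meas : Measurable μ1) (hμ1nonneg : ∀ a, 0 ≤ μ1 a) (hμ1bdd : ∃ C, ∀ a, μ1 a ≤ C)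
    (v : Fin N → ℂ) (i : Fin N) :
    (((collocationMatrix adag β μ0 μ1 N).map (fun x : ℝ => (x : ℂ))).mulVec v) i
      = -(Qv adag N v).eval ((chebNode adag N ((i : ℕ) + 1) : ℝ) : ℂ)
        + (∫ a in (0:ℝ)..adag, ((β a * Pi0 μ0 a : ℝ) : ℂ) * (Qv adag N v).eval ((a : ℝ) : ℂ))
        - ∫ s in (0:ℝ)..(chebNode adag N ((i : ℕ) + 1)),
            ((μ1 s : ℝ) : ℂ) * (Qv adag N v).eval ((s : ℝ) : ℂ) := by
  simp only [Matrix.mulVec, dotProduct, Matrix.map_apply, collocationMatrix]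
  have expand : ∀ h : Fin N,
      ((-((lagrangeBasisPoly adag N ((h : ℕ) + 1)).derivative.eval
            (chebNode adag N ((i : ℕ) + 1)))
        + (∫ a in (0:ℝ)..adag,
            β a * Pi0 μ0 a * (lagrangeBasisPoly adag N ((h : ℕ) + 1)).derivative.eval a)
        - ∫ a in (0:ℝ)..(chebNode adag N ((i : ℕ) + 1)),
            μ1 a * (lagrangeBasisPoly adag N ((h : ℕ) + 1)).derivative.eval a : ℝ) : ℂ) * v h
      = -((((lagrangeBasisPoly adag N ((h : ℕ) + 1)).derivative.eval
            (chebNode adag N ((i : ℕ) + 1)) : ℝ) : ℂ) * v h)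
        + ((∫ a in (0:ℝ)..adag,
            β a * Pi0 μ0 a * (lagrangeBasisPoly adag N ((h : ℕ) + 1)).derivative.eval a : ℝ) : ℂ)
              * v h
        - ((∫ a in (0:ℝ)..(chebNode adag N ((i : ℕ) + 1)),
            μ1 a * (lagrangeBasisPoly adag N ((h : ℕ) + 1)).derivative.eval a : ℝ) : ℂ) * v h := by
    intro h
    push_cast
    ring
  rw [Finset.sum_congr rfl fun h _ => expand h, Finset.sum_sub_distrib, Finset.sum_add_distrib,
    Finset.sum_neg_distrib]
  rw [sum_int_beta hadag hβmeas hβnonneg hβbdd hμ0pos hμ0loc v,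
    sum_int_mu1 hμ1meas hμ1nonneg hμ1bdd v (chebNode adag N ((i : ℕ) + 1)),
    ← Qv_eval]

end Sums

section Antideriv

open Polynomial

variable {adag : ℝ} {N : ℕ}

lemma antideriv (hN : 1 ≤ N) (q : Polynomial ℂ) (hq : q.degree < (N : ℕ)) :
    ∃ F : Polynomial ℂ, F.derivative = q ∧ F.eval 0 = 0 ∧
      F.degree < ((N + 1 : ℕ) : WithBot ℕ) := by
  refine ⟨∑ n ∈ Finset.range N, Polynomial.C (q.coeff n / ((n : ℂ) + 1)) * X ^ (n + 1),
    ?_, ?_, ?_⟩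
  · rw [Polynomial.derivative_sum]
    have key : ∀ n ∈ Finset.range N,
        Polynomial.derivative (Polynomial.C (q.coeff n / ((n : ℂ) + 1)) * X ^ (n + 1))
          = Polynomial.C (q.coeff n) * X ^ n := by
      intro n _
      rw [Polynomial.derivative_C_mul, Polynomial.derivative_X_pow]
      simp only [Nat.add_sub_cancel]
      rw [← mul_assoc, ← Polynomial.C_mul]
      congr 1
      push_cast
      rw [div_mul_cancel₀]
      exact Nat.cast_add_one_ne_zero n
    rw [Finset.sum_congr rfl key]
    have hnd : q.natDegree < N := by
      rcases eq_or_ne q 0 with rfl | hq0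
      · simpa using (show 0 < N from hN)
      · exact (Polynomial.natDegree_lt_iff_degree_lt hq0).mpr hq
    conv_rhs => rw [q.as_sum_range' N hnd]
    exact Finset.sum_congr rfl fun n _ => Polynomial.C_mul_X_pow_eq_monomial
  · rw [Polynomial.eval_finset_sum]
    apply Finset.sum_eq_zero
    intro n _
    simp
  · apply lt_of_le_of_lt (Polynomial.degree_sum_le _ _)
    refine (Finset.sup_lt_iff (WithBot.bot_lt_coe _)).mpr fun n hn => ?_
    calc (Polynomial.C (q.coeff n / ((n : ℂ) + 1)) * X ^ (n + 1)).degree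
        ≤ (Polynomial.C (q.coeff n / ((n : ℂ) + 1))).degree + (X ^ (n + 1) : Polynomial ℂ).degree :=
          Polynomial.degree_mul_le _ _
      _ ≤ 0 + (X ^ (n + 1) : Polynomial ℂ).degree := add_le_add Polynomial.degree_C_le le_rfl
      _ = ((n + 1 : ℕ) : WithBot ℕ) := by rw [zero_add, Polynomial.degree_X_pow]
      _ < ((N + 1 : ℕ) : WithBot ℕ) := by
          rw [Nat.cast_lt]
          have := Finset.mem_range.mp hn
          omega

lemma Qv_surj (hadag : 0 < adag) (hN : 1 ≤ N) (q : Polynomial ℂ)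
    (hq : q.degree < (N : ℕ)) :
    Qv adag N (fun i => ∫ s in (0:ℝ)..(chebNode adag N ((i : ℕ) + 1)),
        q.eval ((s : ℝ) : ℂ)) = q := by
  obtain ⟨F, hFd, hF0, hFdeg⟩ := antideriv hN q hq
  set v : Fin N → ℂ := fun i => ∫ s in (0:ℝ)..(chebNode adag N ((i : ℕ) + 1)),
    q.eval ((s : ℝ) : ℂ) with hv
  have hvF : ∀ i : Fin N, v i = F.eval ((chebNode adag N ((i : ℕ) + 1) : ℝ) : ℂ) := by
    intro i
    rw [hv]
    simp only
    rw [← hFd, poly_integral_C]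
    push_cast
    rw [hF0, sub_zero]
  have hFG : F = ∑ h : Fin N, Polynomial.C (v h) * Lc adag N ((h : ℕ) + 1) := by
    apply Polynomial.eq_of_degrees_lt_of_eval_index_eq
      (v := fun j => ((allNodes adag N j : ℝ) : ℂ)) (Finset.range (N + 1))
    · intro i hi j hj hij
      exact nodes_injOn hadag hi hj (Complex.ofReal_injective hij)
    · rwa [Finset.card_range]
    · rw [Finset.card_range]
      apply lt_of_le_of_lt (Polynomial.degree_sum_le _ _)
      refine (Finset.sup_lt_iff (WithBot.bot_lt_coe _)).mpr fun h _ => ?_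
      calc (Polynomial.C (v h) * Lc adag N ((h : ℕ) + 1)).degree
          ≤ (Polynomial.C (v h)).degree + (Lc adag N ((h : ℕ) + 1)).degree :=
            Polynomial.degree_mul_le _ _
        _ ≤ 0 + (Lc adag N ((h : ℕ) + 1)).degree := add_le_add Polynomial.degree_C_le le_rfl
        _ = (N : WithBot ℕ) := by rw [zero_add, Lc_degree hadag (mem_range_succ h)]
        _ < ((N + 1 : ℕ) : WithBot ℕ) := by rw [Nat.cast_lt]; omega
    · intro j hj
      rcases Nat.eq_zero_or_pos j with rfl | hj1
      · have h0 : allNodes adag N 0 = 0 := by rw [allNodes, if_pos rfl]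
        rw [h0, P_eval_zero hadag v]
        simpa using hF0
      · obtain ⟨k, rfl⟩ : ∃ k, j = k + 1 := ⟨j - 1, by omega⟩
        have hk : k < N := by
          have := Finset.mem_range.mp hj
          omega
        have hnode : allNodes adag N (k + 1)
            = chebNode adag N (((⟨k, hk⟩ : Fin N) : ℕ) + 1) := by
          rw [allNodes, if_neg (by omega)]
        rw [hnode, P_eval_node hadag v ⟨k, hk⟩]
        exact (hvF ⟨k, hk⟩).symm
  rw [Qv_derivative, ← hFG, hFd]

end Antideriv

section Final

open Polynomial

variable {adag : ℝ} {N : ℕ} {β μ0 μ1 : ℝ → ℝ} {γ : ℂ}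

lemma int_gm (hμ1meas : Measurable μ1) (hμ1nonneg : ∀ a, 0 ≤ μ1 a)
    (hμ1bdd : ∃ C, ∀ a, μ1 a ≤ C) (γ : ℂ) (r : Polynomial ℂ) (a b : ℝ) :
    IntervalIntegrable (fun s => (γ + ((μ1 s : ℝ) : ℂ)) * r.eval ((s : ℝ) : ℂ))
      volume a b := by
  have hfe : (fun s : ℝ => (γ + ((μ1 s : ℝ) : ℂ)) * r.eval ((s : ℝ) : ℂ))
      = fun s => γ * r.eval ((s : ℝ) : ℂ) + ((μ1 s : ℝ) : ℂ) * r.eval ((s : ℝ) : ℂ) := by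
    funext s; ring
  rw [hfe]
  exact ((continuous_const.mul (cont_eval r)).intervalIntegrable a b).add
    (int_mu1C hμ1meas hμ1nonneg hμ1bdd (cont_eval r) a b)

lemma split_int (hμ1meas : Measurable μ1) (hμ1nonneg : ∀ a, 0 ≤ μ1 a)
    (hμ1bdd : ∃ C, ∀ a, μ1 a ≤ C) (γ : ℂ) (r : Polynomial ℂ) (c : ℝ) :
    (∫ s in (0:ℝ)..c, (γ + ((μ1 s : ℝ) : ℂ)) * r.eval ((s : ℝ) : ℂ))
      = γ * (∫ s in (0:ℝ)..c, r.eval ((s : ℝ) : ℂ))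
        + ∫ s in (0:ℝ)..c, ((μ1 s : ℝ) : ℂ) * r.eval ((s : ℝ) : ℂ) := by
  rw [← intervalIntegral.integral_const_mul, ← intervalIntegral.integral_add
    (f := fun s : ℝ => γ * r.eval ((s : ℝ) : ℂ))
    ((continuous_const.mul (cont_eval r)).intervalIntegrable 0 c)
    (int_mu1C hμ1meas hμ1nonneg hμ1bdd (cont_eval r) 0 c)]
  apply intervalIntegral.integral_congr
  intro s _
  simp only
  ring

lemma degree_C_mul_le' (a : ℂ) (p : Polynomial ℂ) :
    (Polynomial.C a * p).degree ≤ p.degree := by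
  calc (Polynomial.C a * p).degree ≤ (Polynomial.C a).degree + p.degree :=
        Polynomial.degree_mul_le _ _
    _ ≤ 0 + p.degree := add_le_add Polynomial.degree_C_le le_rfl
    _ = p.degree := zero_add _

end Final

/-- If the collocation problem with right-hand side `1` has the unique
solution `q_N(·;γ,1)`, then `γ` is an eigenvalue of the collocation matrix `K_N` if and
only if the discrete characteristic equation `K̂_N(γ) = ∫_0^{a†} β Π0 q_N(·;γ,1) = 1`
holds. -/
theorem discrete_characteristic_equation
    (adag : ℝ) (hadag : 0 < adag) (β μ0 μ1 : ℝ → ℝ)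
    (hβmeas : Measurable β) (hβnonneg : ∀ a, 0 ≤ β a) (hβbdd : ∃ C, ∀ a, β a ≤ C)
    (hμ0pos : ∀ a, 0 < μ0 a)
    (hμ0loc : ∀ b, 0 ≤ b → b < adag → IntegrableOn μ0 (Set.Icc 0 b))
    (hμ0div : ¬ IntegrableOn μ0 (Set.Ico 0 adag))
    (hμ1meas : Measurable μ1) (hμ1nonneg : ∀ a, 0 ≤ μ1 a) (hμ1bdd : ∃ C, ∀ a, μ1 a ≤ C)
    (N : ℕ) (γ : ℂ) (qN : Polynomial ℂ)
    (hqN : IsCollocationSolution adag μ1 γ 1 N qN)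
    (hqNuniq : ∀ q' : Polynomial ℂ, IsCollocationSolution adag μ1 γ 1 N q' → q' = qN) :
    (∃ v : Fin N → ℂ, v ≠ 0 ∧
        ((collocationMatrix adag β μ0 μ1 N).map (fun x : ℝ => (x : ℂ))).mulVec v = γ • v)
      ↔ (∫ a in (0:ℝ)..adag, ((β a * Pi0 μ0 a : ℝ) : ℂ) * qN.eval ((a : ℝ) : ℂ)) = 1 := by
  rcases Nat.eq_zero_or_pos N with rfl | hN
  · -- degenerate case N = 0 : both sides are false
    constructor
    · rintro ⟨v, hv, -⟩
      exact absurd (Subsingleton.elim v 0) hv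
    · intro h
      exfalso
      have hq0 : qN = 0 := by
        have hd := hqN.1
        rw [Nat.cast_zero] at hd
        exact Polynomial.degree_eq_bot.mp (Nat.WithBot.lt_zero_iff.mp hd)
      rw [hq0] at h
      simp at h
  constructor
  · -- eigenvalue ⇒ characteristic equation
    rintro ⟨v, hv, heig⟩
    set q := Qv adag N v with hqdef
    set c : ℂ := ∫ a in (0:ℝ)..adag, ((β a * Pi0 μ0 a : ℝ) : ℂ) * q.eval ((a : ℝ) : ℂ)
      with hcdef
    have hcolloc : ∀ i : Fin N,
        q.eval ((chebNode adag N ((i : ℕ) + 1) : ℝ) : ℂ)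
          + (∫ s in (0:ℝ)..(chebNode adag N ((i : ℕ) + 1)),
              (γ + ((μ1 s : ℝ) : ℂ)) * q.eval ((s : ℝ) : ℂ)) = c := by
      intro i
      have h1 := mulVec_eq hadag hβmeas hβnonneg hβbdd hμ0pos hμ0loc hμ1meas hμ1nonneg
        hμ1bdd v i
      have h2 : (((collocationMatrix adag β μ0 μ1 N).map
          (fun x : ℝ => (x : ℂ))).mulVec v) i = γ * v i := by
        rw [heig]; simp
      rw [h2, ← hqdef, ← hcdef] at h1
      rw [split_int hμ1meas hμ1nonneg hμ1bdd γ q, Qv_int hadag v i]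
      linear_combination h1
    by_cases hc0 : c = 0
    · exfalso
      have hsol : IsCollocationSolution adag μ1 γ 1 N (qN + q) := by
        constructor
        · calc (qN + q).degree ≤ max qN.degree q.degree := Polynomial.degree_add_le _ _
            _ < (N : ℕ) := max_lt hqN.1 (Qv_degree hadag v)
        · intro i hi
          have hi' := Finset.mem_Icc.mp hi
          have hik : i = ((⟨i - 1, by omega⟩ : Fin N) : ℕ) + 1 := by simp; omega
          set k : Fin N := ⟨i - 1, by omega⟩ with hk
          have e1 := hqN.2 i hi
          have e2 := hcolloc k
          rw [hc0] at e2
          rw [hik] at e1 ⊢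
          have hsplit : (∫ s in (0:ℝ)..(chebNode adag N ((k : ℕ) + 1)),
              (γ + ((μ1 s : ℝ) : ℂ)) * (qN + q).eval ((s : ℝ) : ℂ))
              = (∫ s in (0:ℝ)..(chebNode adag N ((k : ℕ) + 1)),
                  (γ + ((μ1 s : ℝ) : ℂ)) * qN.eval ((s : ℝ) : ℂ))
                + ∫ s in (0:ℝ)..(chebNode adag N ((k : ℕ) + 1)),
                  (γ + ((μ1 s : ℝ) : ℂ)) * q.eval ((s : ℝ) : ℂ) := by
            rw [← intervalIntegral.integral_add
              (int_gm hμ1meas hμ1nonneg hμ1bdd γ qN 0 _)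
              (int_gm hμ1meas hμ1nonneg hμ1bdd γ q 0 _)]
            apply intervalIntegral.integral_congr
            intro s _
            simp only [Polynomial.eval_add]
            ring
          rw [hsplit, Polynomial.eval_add]
          linear_combination e1 + e2
      have huniq := hqNuniq _ hsol
      have hq0 : q = 0 := by
        have := huniq
        rwa [add_eq_left] at this
      apply hv
      funext i
      have := Qv_int hadag v i
      rw [← hqdef, hq0] at this
      simpa using this.symm
    · have hsol : IsCollocationSolution adag μ1 γ 1 N (Polynomial.C c⁻¹ * q) := by
        constructor
        · exact lt_of_le_of_lt (degree_C_mul_le' _ _) (Qv_degree hadag v)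
        · intro i hi
          have hi' := Finset.mem_Icc.mp hi
          have hik : i = ((⟨i - 1, by omega⟩ : Fin N) : ℕ) + 1 := by simp; omega
          set k : Fin N := ⟨i - 1, by omega⟩ with hk
          have e2 := hcolloc k
          rw [hik]
          have hscale : (∫ s in (0:ℝ)..(chebNode adag N ((k : ℕ) + 1)),
              (γ + ((μ1 s : ℝ) : ℂ)) * (Polynomial.C c⁻¹ * q).eval ((s : ℝ) : ℂ))
              = c⁻¹ * ∫ s in (0:ℝ)..(chebNode adag N ((k : ℕ) + 1)),
                  (γ + ((μ1 s : ℝ) : ℂ)) * q.eval ((s : ℝ) : ℂ) := by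
            rw [← intervalIntegral.integral_const_mul]
            apply intervalIntegral.integral_congr
            intro s _
            simp only [Polynomial.eval_mul, Polynomial.eval_C]
            ring
          rw [hscale, Polynomial.eval_mul, Polynomial.eval_C]
          field_simp
          linear_combination e2
      have huniq := hqNuniq _ hsol
      rw [← huniq]
      have hfin : (∫ a in (0:ℝ)..adag, ((β a * Pi0 μ0 a : ℝ) : ℂ)
          * (Polynomial.C c⁻¹ * q).eval ((a : ℝ) : ℂ)) = c⁻¹ * c := by
        conv_rhs => rw [hcdef]
        rw [← intervalIntegral.integral_const_mul]
        apply intervalIntegral.integral_congr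
        intro a _
        simp only [Polynomial.eval_mul, Polynomial.eval_C]
        ring
      rw [hfin, inv_mul_cancel₀ hc0]
  · -- characteristic equation ⇒ eigenvalue
    intro hint
    set v : Fin N → ℂ := fun i => ∫ s in (0:ℝ)..(chebNode adag N ((i : ℕ) + 1)),
      qN.eval ((s : ℝ) : ℂ) with hvdef
    have hQv : Qv adag N v = qN := Qv_surj hadag hN qN hqN.1
    refine ⟨v, ?_, ?_⟩
    · intro hv0
      have hqN0 : qN = 0 := by
        rw [← hQv, hv0]
        unfold Qv
        simp
      rw [hqN0] at hint
      simp at hint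
    · funext i
      have h1 := mulVec_eq hadag hβmeas hβnonneg hβbdd hμ0pos hμ0loc hμ1meas hμ1nonneg
        hμ1bdd v i
      rw [hQv] at h1
      have hmem : (i : ℕ) + 1 ∈ Finset.Icc 1 N := Finset.mem_Icc.mpr ⟨by omega,
        by have := i.isLt; omega⟩
      have e1 := hqN.2 ((i : ℕ) + 1) hmem
      rw [split_int hμ1meas hμ1nonneg hμ1bdd γ qN] at e1
      have hvi : v i = ∫ s in (0:ℝ)..(chebNode adag N ((i : ℕ) + 1)),
          qN.eval ((s : ℝ) : ℂ) := rfl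
      rw [h1, hint]
      simp only [Pi.smul_apply, smul_eq_mul]
      rw [hvi]
      linear_combination -e1
end

section
/- Let d > 0, let γ ∈ ℂ satisfy K̂(γ) = 1, and let g ∈ L²(Ω,ℂ), not a.e. zero, satisfy L g = θ g for some θ ∈ ℝ, where L is the Neumann nonlocal diffusion operator. Set λ := γ + dθ and φ(a,x) := exp(−γ a − ∫_0^a μ1(s) ds) g(x). Then φ is not a.e. zero, φ(0,·) = ∫_0^{a†} β(a)Π0(a)φ(a,·) da, and for every a ∈ [0,a†], ∂_a φ(a,·) = d·L φ(a,·) − μ1(a)φ(a,·) − λ φ(a,·) in L²(Ω,ℂ). In particular, λ = γ + dθ is an eigenvalue of the generator of the age-structured model with Neumann nonlocal diffusion, which proves the inclusion σ_p(K^a) + d·σ_p(L) ⊆ σ_p(A). -/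
open MeasureTheory

/-- For the age-structured model with Neumann nonlocal diffusion
(`T` represents `L g = ∫_Ω J(x−y)(g(y)−g(x)) dy` on `L²(Ω,ℂ)`): if `K̂(γ) = 1` and
`T g = θ g` with `g ≠ 0`, then `φ(a) = exp(−γa − ∫_0^a μ1) g` is a nonzero solution of
the eigenvalue problem for the generator with eigenvalue `λ = γ + dθ`; hence
`σ_p(K^a) + d σ_p(L) ⊆ σ_p(A)`. -/
theorem neumann_spectrum_inclusion
    {n : ℕ} (Ω : Set (EuclideanSpace ℝ (Fin n)))
    (hΩne : Ω.Nonempty) (hΩo : IsOpen Ω) (hΩb : Bornology.IsBounded Ω)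
    (hΩconn : IsConnected Ω)
    (J : EuclideanSpace ℝ (Fin n) → ℝ)
    (hJcont : Continuous J) (hJsupp : HasCompactSupport J)
    (hJnonneg : ∀ x, 0 ≤ J x) (hJsymm : ∀ x, J (-x) = J x)
    (hJint : ∫ x, J x = 1) (hJ0 : 0 < J 0)
    (T : Lp ℂ 2 (volume.restrict Ω) →L[ℂ] Lp ℂ 2 (volume.restrict Ω))
    (hT : ∀ g : Lp ℂ 2 (volume.restrict Ω),
      T g =ᵐ[volume.restrict Ω] fun x => ∫ y in Ω, (J (x - y) : ℂ) * (g y - g x))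
    (adag : ℝ) (hadag : 0 < adag) (β μ0 μ1 : ℝ → ℝ)
    (hβmeas : Measurable β) (hβnonneg : ∀ a, 0 ≤ β a) (hβbdd : ∃ C, ∀ a, β a ≤ C)
    (hμ0pos : ∀ a, 0 < μ0 a)
    (hμ0loc : ∀ b, 0 ≤ b → b < adag → IntegrableOn μ0 (Set.Icc 0 b))
    (hμ0div : ¬ IntegrableOn μ0 (Set.Ico 0 adag))
    (hμ1cont : Continuous μ1) (hμ1nonneg : ∀ a, 0 ≤ μ1 a)
    (d : ℝ) (hd : 0 < d)
    (γ : ℂ) (hγ : Khat adag β μ0 μ1 γ = 1)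
    (θ : ℝ) (g : Lp ℂ 2 (volume.restrict Ω)) (hgne : g ≠ 0)
    (hgeig : T g = (θ : ℂ) • g) :
    -- φ is not a.e. zero (as an element of L¹([0,a†],L²))
    (¬ (∀ᵐ a ∂(volume.restrict (Set.Ioc 0 adag)),
        (Complex.exp (-γ * a - ((∫ s in (0:ℝ)..a, μ1 s : ℝ) : ℂ))) • g = 0)) ∧
    -- birth condition φ(0,·) = ∫_0^{a†} β Π0 φ(a,·) da
    ((Complex.exp (-γ * 0 - ((∫ s in (0:ℝ)..(0:ℝ), μ1 s : ℝ) : ℂ))) • g =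
      ∫ a in (0:ℝ)..adag, ((β a * Pi0 μ0 a : ℝ) : ℂ) •
        ((Complex.exp (-γ * a - ((∫ s in (0:ℝ)..a, μ1 s : ℝ) : ℂ))) • g)) ∧
    -- the abstract ODE: ∂_a φ(a,·) = d L φ(a,·) − μ1(a) φ(a,·) − λ φ(a,·)
    (∀ a ∈ Set.Icc (0:ℝ) adag,
      HasDerivAt
        (fun r : ℝ => (Complex.exp (-γ * r - ((∫ s in (0:ℝ)..r, μ1 s : ℝ) : ℂ))) • g)
        ((d : ℂ) • T ((Complex.exp (-γ * a - ((∫ s in (0:ℝ)..a, μ1 s : ℝ) : ℂ))) • g)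
          - ((μ1 a : ℝ) : ℂ) •
              ((Complex.exp (-γ * a - ((∫ s in (0:ℝ)..a, μ1 s : ℝ) : ℂ))) • g)
          - (γ + (d : ℂ) * (θ : ℂ)) •
              ((Complex.exp (-γ * a - ((∫ s in (0:ℝ)..a, μ1 s : ℝ) : ℂ))) • g))
        a) := by
  refine ⟨?_, ?_, ?_⟩
  · intro h
    have hne : volume.restrict (Set.Ioc (0:ℝ) adag) ≠ 0 := by
      rw [Ne, Measure.restrict_eq_zero, Real.volume_Ioc]
      simpa [hadag.le] using hadag
    haveI : (ae (volume.restrict (Set.Ioc (0:ℝ) adag))).NeBot := ae_neBot.mpr hne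
    obtain ⟨a, ha⟩ := h.exists
    rcases smul_eq_zero.mp ha with h1 | h2
    · exact Complex.exp_ne_zero _ h1
    · exact hgne h2
  · have h1 : (∫ a in (0:ℝ)..adag, ((β a * Pi0 μ0 a : ℝ) : ℂ) •
        ((Complex.exp (-γ * a - ((∫ s in (0:ℝ)..a, μ1 s : ℝ) : ℂ))) • g))
      = (∫ a in (0:ℝ)..adag, ((β a * Pi0 μ0 a : ℝ) : ℂ) *
          Complex.exp (-γ * a - ((∫ s in (0:ℝ)..a, μ1 s : ℝ) : ℂ))) • g := by
      simp_rw [smul_smul]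
      exact intervalIntegral.integral_smul_const _ _
    rw [h1]
    have h2 : (∫ a in (0:ℝ)..adag, ((β a * Pi0 μ0 a : ℝ) : ℂ) *
          Complex.exp (-γ * a - ((∫ s in (0:ℝ)..a, μ1 s : ℝ) : ℂ)))
        = Khat adag β μ0 μ1 γ := by
      unfold Khat
      congr 1
      funext a
      congr 1
      congr 1
      ring
    rw [h2, hγ]
    simp
  · intro a _
    have hInt : HasDerivAt (fun r : ℝ => ∫ s in (0:ℝ)..r, μ1 s) (μ1 a) a :=
      intervalIntegral.integral_hasDerivAt_right
        (hμ1cont.intervalIntegrable 0 a)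
        hμ1cont.stronglyMeasurable.stronglyMeasurableAtFilter
        hμ1cont.continuousAt
    have hu : HasDerivAt (fun r : ℝ => -γ * r - ((∫ s in (0:ℝ)..r, μ1 s : ℝ) : ℂ))
        (-γ - ((μ1 a : ℝ) : ℂ)) a := by
      have hlin : HasDerivAt (fun r : ℝ => -γ * (r : ℂ)) (-γ) a := by
        simpa using ((hasDerivAt_id a).ofReal_comp.const_mul (-γ))
      exact hlin.sub hInt.ofReal_comp
    have hE := hu.cexp
    have key := hE.smul_const g
    refine key.congr_deriv ?_
    rw [T.map_smul, hgeig]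
    simp only [smul_smul]
    rw [← sub_smul, ← sub_smul]
    congr 1
    ring
end
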